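/- arXiv:1003.3218 — 2 statements merged into one kernel-verified Lean document; each statement's English description precedes it below -/
import Mathlib

section
/- Let c be a step speed function, q ∈ ℝ, and fix z, w > 0. Then there exists a constant C = C(z, w, c, q) < ∞ such that for all δ ∈ (0,1]: (i) for all a ∈ [0,z], Γ^q((a,0),(z,δ)) − Γ^q((a,0),(z,0)) ≤ C√δ; and (ii) for all b ∈ [0,w], Γ^q((−b,b),(−w,w+δ)) − Γ^q((−b,b),(−w,w)) ≤ C√δ. -/
open MeasureTheory ProbabilityTheory Real Set Filter Topology

noncomputable section


/-! ### The macroscopic wedge, paths and the variational constant `Γ^q` -/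

/-- The wedge `𝒲 = {(x,y) : y ≥ 0, x ≥ -y}`. -/
def Wedge : Set (ℝ × ℝ) := {p | 0 ≤ p.2 ∧ -p.2 ≤ p.1}

/-- The homogeneous last-passage constant `γ(x,y) = (√(x+y) + √y)²`. -/
def gam (p : ℝ × ℝ) : ℝ := (Real.sqrt (p.1 + p.2) + Real.sqrt p.2) ^ 2

/-- `f` is a continuous, piecewise `C¹` path on `[0,1]` from `p₀` to `p₁` whose derivative
(where defined) lies in the wedge. -/
def IsWedgePath (p₀ p₁ : ℝ × ℝ) (f : ℝ → ℝ × ℝ) : Prop :=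
  ContinuousOn f (Icc 0 1) ∧ f 0 = p₀ ∧ f 1 = p₁ ∧
    ∃ (k : ℕ) (s : Fin (k + 1) → ℝ), StrictMono s ∧ s 0 = 0 ∧ s (Fin.last k) = 1 ∧
      ∀ i : Fin k,
        ContDiffOn ℝ 1 f (Icc (s i.castSucc) (s i.succ)) ∧
        ∀ t ∈ Ioo (s i.castSucc) (s i.succ), deriv f t ∈ Wedge

/-- The functional `∫₀¹ γ(x'(s)) / c(x₁(s) - q) ds` of a macroscopic path. -/
def wPathIntegral (c : ℝ → ℝ) (q : ℝ) (f : ℝ → ℝ × ℝ) : ℝ :=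
  ∫ s in (0:ℝ)..1, gam (deriv f s) / c ((f s).1 - q)

/-- `Γ^q` with a general starting point. -/
def GammaFrom (c : ℝ → ℝ) (q : ℝ) (p₀ p₁ : ℝ × ℝ) : ℝ :=
  sSup { I | ∃ f, IsWedgePath p₀ p₁ f ∧ I = wPathIntegral c q f }

/-- `Γ^q(x,y)`: supremum of the path functional over paths from the origin to `(x,y)`. -/
def GammaQ (c : ℝ → ℝ) (q : ℝ) (p : ℝ × ℝ) : ℝ := GammaFrom c q (0, 0) p

/-! ### Speed functions -/

/-- A speed function: positive, lower semicontinuous, equal at every point to the minimum of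
its one-sided limits (which exist), with finitely many discontinuities in every compact set. -/
def IsSpeedFunction (c : ℝ → ℝ) : Prop :=
  (∀ x, 0 < c x) ∧ LowerSemicontinuous c ∧
    (∀ x : ℝ, ∃ l r : ℝ,
      Tendsto c (nhdsWithin x (Iio x)) (𝓝 l) ∧
      Tendsto c (nhdsWithin x (Ioi x)) (𝓝 r) ∧ c x = min l r) ∧
    ∀ K : Set ℝ, IsCompact K → {x ∈ K | ¬ ContinuousAt c x}.Finite

/-- Data of a step speed function: finitely many cut points `a₁ < … < a_N` and positive
values `r₀, …, r_N` on the successive open intervals. -/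
structure StepSpeedData where
  N : ℕ
  a : Fin N → ℝ
  ha : StrictMono a
  r : Fin (N + 1) → ℝ
  hr : ∀ m, 0 < r m

/-- `x` lies in the `i`-th open interval determined by the cut points of `d`. -/
def StepSpeedData.InOpenPiece (d : StepSpeedData) (i : Fin (d.N + 1)) (x : ℝ) : Prop :=
  (∀ j : Fin d.N, (j : ℕ) < (i : ℕ) → d.a j < x) ∧
  (∀ j : Fin d.N, (i : ℕ) ≤ (j : ℕ) → x < d.a j)

/-- `c` is the lower semicontinuous step function determined by the data `d`:
it equals `r i` on the `i`-th open interval and `min` of the adjacent values at cut points. -/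
def StepSpeedData.IsStepOf (d : StepSpeedData) (c : ℝ → ℝ) : Prop :=
  (∀ (i : Fin (d.N + 1)) (x : ℝ), d.InOpenPiece i x → c x = d.r i) ∧
  (∀ j : Fin d.N, c (d.a j) = min (d.r j.castSucc) (d.r j.succ))

/-- `c` is a (lower semicontinuous, positive) step speed function. -/
def IsStepSpeed (c : ℝ → ℝ) : Prop := ∃ d : StepSpeedData, d.IsStepOf c

/-! ### The lattice wedge and last-passage times -/

/-- The lattice wedge `ℒ = {(i,j) : j ≥ 1, i ≥ -j+1}`. -/
def LatticeWedge : Set (ℤ × ℤ) := {p | 1 ≤ p.2 ∧ 1 - p.2 ≤ p.1}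

/-- An admissible lattice path from `(0,1)` to `target`, with steps `(1,0)`, `(0,1)`, `(-1,1)`. -/
def IsLatticePath (target : ℤ × ℤ) (pa : List (ℤ × ℤ)) : Prop :=
  pa.head? = some (0, 1) ∧ pa.getLast? = some target ∧
    List.Chain' (fun u v =>
      v = (u.1 + 1, u.2) ∨ v = (u.1, u.2 + 1) ∨ v = (u.1 - 1, u.2 + 1)) pa

/-- Total weight collected by a lattice path in the environment `env`. -/
def pathWeight (env : ℤ × ℤ → ℝ) (pa : List (ℤ × ℤ)) : ℝ := (pa.map env).sum

/-- The wedge last passage time to `uv` in the environment `env` (zero off the lattice wedge). -/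
def wedgeLPT (env : ℤ × ℤ → ℝ) : ℤ × ℤ → ℝ :=
  LatticeWedge.indicator fun uv =>
    sSup { s | ∃ pa : List (ℤ × ℤ), IsLatticePath uv pa ∧ s = pathWeight env pa }

/-- The environment of the `n`-th process with shift `ℓ`, speed function `c` and
exponential weights `τ`: site `(i,j)` carries `c((i-ℓ)/n)⁻¹ τ_{i,j}`. -/
def wedgeEnv (c : ℝ → ℝ) (n : ℕ) (ℓ : ℤ) (τ : ℤ × ℤ → ℝ) : ℤ × ℤ → ℝ :=
  fun p => (c (((p.1 : ℝ) - (ℓ : ℝ)) / (n : ℝ)))⁻¹ * τ p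



/-! ### Auxiliary lemmas -/

namespace Aux

open intervalIntegral

/-- minimum of the step values -/
def rmin (d : StepSpeedData) : ℝ := Finset.univ.inf' Finset.univ_nonempty d.r

lemma rmin_pos (d : StepSpeedData) : 0 < rmin d := by
  rw [rmin, Finset.lt_inf'_iff]
  exact fun i _ => d.hr i

lemma rmin_le (d : StepSpeedData) (i : Fin (d.N + 1)) : rmin d ≤ d.r i :=
  Finset.inf'_le _ (Finset.mem_univ i)

lemma exists_piece (d : StepSpeedData) {x : ℝ} (hx : x ∉ Set.range d.a) :
    ∃ i, d.InOpenPiece i x := by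
  classical
  set S : Finset (Fin d.N) := Finset.univ.filter (fun j => d.a j < x) with hS
  have hnotmem : ∀ j : Fin d.N, j ∉ S → x < d.a j := by
    intro j hj
    have h1 : ¬ d.a j < x := by simpa [hS] using hj
    rcases lt_or_eq_of_le (not_lt.1 h1) with h | h
    · exact h
    · exact absurd ⟨j, h.symm⟩ hx
  by_cases hSe : S.Nonempty
  · set jm := S.max' hSe with hjm
    have hmem : ∀ j : Fin d.N, j ≤ jm → j ∈ S := by
      intro j hj
      have hjmS : jm ∈ S := S.max'_mem hSe
      have : d.a j ≤ d.a jm := d.ha.monotone hj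
      have : d.a j < x := lt_of_le_of_lt this (by simpa [hS] using hjmS)
      simpa [hS] using this
    refine ⟨jm.succ, ?_, ?_⟩
    · intro j hj
      have : j ≤ jm := by
        have : (j : ℕ) ≤ (jm : ℕ) := by rw [Fin.val_succ] at hj; omega
        exact Fin.le_def.2 this
      simpa [hS] using hmem j this
    · intro j hj
      apply hnotmem
      intro hjS
      have h3 : (j : ℕ) ≤ (jm : ℕ) := Fin.le_def.1 (S.le_max' j hjS)
      have h4 : (jm.succ : ℕ) = (jm : ℕ) + 1 := Fin.val_succ jm
      omega
  · refine ⟨0, ?_, ?_⟩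
    · intro j hj; simp at hj
    · intro j _
      apply hnotmem
      intro hjS
      exact hSe ⟨j, hjS⟩

lemma isOpen_piece (d : StepSpeedData) (i : Fin (d.N + 1)) :
    IsOpen {x | d.InOpenPiece i x} := by
  have : {x | d.InOpenPiece i x} =
      (⋂ j : Fin d.N, {x | (j : ℕ) < (i : ℕ) → d.a j < x}) ∩
      (⋂ j : Fin d.N, {x | (i : ℕ) ≤ (j : ℕ) → x < d.a j}) := by
    ext x
    simp [StepSpeedData.InOpenPiece, Set.mem_iInter]
  rw [this]
  refine IsOpen.inter (isOpen_iInter_of_finite fun j => ?_) (isOpen_iInter_of_finite fun j => ?_)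
  · by_cases h : (j : ℕ) < (i : ℕ)
    · simp only [h, true_implies]; exact isOpen_Ioi
    · simp [h]
  · by_cases h : (i : ℕ) ≤ (j : ℕ)
    · simp only [h, true_implies]; exact isOpen_Iio
    · simp [h]

lemma c_ge_rmin {d : StepSpeedData} {c : ℝ → ℝ} (hd : d.IsStepOf c) (x : ℝ) :
    rmin d ≤ c x := by
  by_cases hx : x ∈ Set.range d.a
  · obtain ⟨j, rfl⟩ := hx
    rw [hd.2 j]
    exact le_min (rmin_le d _) (rmin_le d _)
  · obtain ⟨i, hi⟩ := exists_piece d hx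
    rw [hd.1 i x hi]
    exact rmin_le d i

lemma c_pos {d : StepSpeedData} {c : ℝ → ℝ} (hd : d.IsStepOf c) (x : ℝ) : 0 < c x :=
  lt_of_lt_of_le (rmin_pos d) (c_ge_rmin hd x)

lemma c_eventually_const {d : StepSpeedData} {c : ℝ → ℝ} (hd : d.IsStepOf c) {x : ℝ}
    (hx : x ∉ Set.range d.a) : ∀ᶠ y in nhds x, c y = c x := by
  obtain ⟨i, hi⟩ := exists_piece d hx
  have hmem : {y | d.InOpenPiece i y} ∈ nhds x := (isOpen_piece d i).mem_nhds hi
  filter_upwards [hmem] with y hy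
  rw [hd.1 i y hy, hd.1 i x hi]

lemma c_measurable {d : StepSpeedData} {c : ℝ → ℝ} (hd : d.IsStepOf c) : Measurable c := by
  have hA : (Set.range d.a).Finite := Set.finite_range d.a
  have hopen : IsOpen ((Set.range d.a)ᶜ) := hA.isClosed.isOpen_compl
  have hcont : ContinuousOn c ((Set.range d.a)ᶜ) := by
    intro x hx
    have h : c =ᶠ[nhds x] (fun _ => c x) := c_eventually_const hd hx
    exact h.continuousAt.continuousWithinAt
  apply measurable_of_isOpen
  intro t ht
  have heq : c ⁻¹' t = ((Set.range d.a)ᶜ ∩ c ⁻¹' t) ∪ (Set.range d.a ∩ c ⁻¹' t) := by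
    ext y; by_cases hy : y ∈ Set.range d.a <;> simp [hy]
  rw [heq]
  exact ((hcont.isOpen_inter_preimage hopen ht).measurableSet).union
    ((hA.inter_of_left _).measurableSet)


lemma c_const_right {d : StepSpeedData} {c : ℝ → ℝ} (hd : d.IsStepOf c) (x : ℝ) :
    ∃ ε > (0:ℝ), ∃ ρ, ∀ y ∈ Ioo x (x + ε), c y = ρ := by
  classical
  set S : Finset (Fin d.N) := Finset.univ.filter (fun j => x < d.a j) with hS
  have hnotmem : ∀ j : Fin d.N, j ∉ S → d.a j ≤ x := by
    intro j hj
    have : ¬ x < d.a j := by simpa [hS] using hj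
    exact not_lt.1 this
  by_cases hSe : S.Nonempty
  · set j0 := S.min' hSe with hj0
    have hj0x : x < d.a j0 := by
      have := S.min'_mem hSe; simpa [hS] using this
    refine ⟨d.a j0 - x, by linarith, d.r j0.castSucc, ?_⟩
    intro y hy
    apply hd.1 j0.castSucc
    constructor
    · intro j hj
      have hjS : j ∉ S := by
        intro hjS
        have := S.min'_le j hjS
        have := Fin.le_def.1 this
        simp [Fin.coe_castSucc] at hj
        omega
      exact lt_of_le_of_lt (hnotmem j hjS) hy.1
    · intro j hj
      have : j0 ≤ j := Fin.le_def.2 (by simpa [Fin.coe_castSucc] using hj)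
      have := d.ha.monotone this
      have hy2 := hy.2
      linarith
  · refine ⟨1, one_pos, d.r (Fin.last d.N), ?_⟩
    intro y hy
    apply hd.1 (Fin.last d.N)
    constructor
    · intro j _
      have hjS : j ∉ S := fun h => hSe ⟨j, h⟩
      exact lt_of_le_of_lt (hnotmem j hjS) hy.1
    · intro j hj
      have := j.isLt
      simp [Fin.val_last] at hj
      omega
  
lemma c_const_left {d : StepSpeedData} {c : ℝ → ℝ} (hd : d.IsStepOf c) (x : ℝ) :
    ∃ ε > (0:ℝ), ∃ ρ, ∀ y ∈ Ioo (x - ε) x, c y = ρ := by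
  classical
  set S : Finset (Fin d.N) := Finset.univ.filter (fun j => d.a j < x) with hS
  have hnotmem : ∀ j : Fin d.N, j ∉ S → x ≤ d.a j := by
    intro j hj
    have : ¬ d.a j < x := by simpa [hS] using hj
    exact not_lt.1 this
  by_cases hSe : S.Nonempty
  · set jm := S.max' hSe with hjm
    have hjmx : d.a jm < x := by
      have := S.max'_mem hSe; simpa [hS] using this
    refine ⟨x - d.a jm, by linarith, d.r jm.succ, ?_⟩
    intro y hy
    apply hd.1 jm.succ
    constructor
    · intro j hj
      have : j ≤ jm := Fin.le_def.2 (by simp [Fin.val_succ] at hj; omega)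
      have := d.ha.monotone this
      have hy1 := hy.1
      linarith
    · intro j hj
      have hjS : j ∉ S := by
        intro hjS
        have := Fin.le_def.1 (S.le_max' j hjS)
        simp [Fin.val_succ] at hj
        omega
      exact lt_of_lt_of_le hy.2 (hnotmem j hjS)
  · refine ⟨1, one_pos, d.r 0, ?_⟩
    intro y hy
    apply hd.1 0
    constructor
    · intro j hj; simp at hj
    · intro j _
      have hjS : j ∉ S := fun h => hSe ⟨j, h⟩
      exact lt_of_lt_of_le hy.2 (hnotmem j hjS)

/-- the reciprocal speed -/
def uf (c : ℝ → ℝ) (q : ℝ) : ℝ → ℝ := fun x => (c (x - q))⁻¹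

/-- primitive of the reciprocal speed -/
def Uf (c : ℝ → ℝ) (q : ℝ) : ℝ → ℝ := fun x => ∫ t in (0:ℝ)..x, uf c q t

variable {d : StepSpeedData} {c : ℝ → ℝ}

lemma u_nonneg (hd : d.IsStepOf c) (q : ℝ) (x : ℝ) : 0 ≤ uf c q x :=
  inv_nonneg.2 (c_pos hd _).le

lemma u_le (hd : d.IsStepOf c) (q : ℝ) (x : ℝ) : uf c q x ≤ (rmin d)⁻¹ :=
  inv_anti₀ (rmin_pos d) (c_ge_rmin hd _)

lemma u_meas (hd : d.IsStepOf c) (q : ℝ) : Measurable (uf c q) :=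
  ((c_measurable hd).comp (measurable_id.sub_const q)).inv

lemma u_intInt (hd : d.IsStepOf c) (q : ℝ) (a b : ℝ) : IntervalIntegrable (uf c q) volume a b := by
  rw [intervalIntegrable_iff]
  refine MeasureTheory.Integrable.mono' (g := fun _ => (rmin d)⁻¹)
    (MeasureTheory.integrableOn_const measure_Ioc_lt_top.ne)
    ((u_meas hd q).aestronglyMeasurable) ?_
  filter_upwards with y
  rw [Real.norm_eq_abs, abs_of_nonneg (u_nonneg hd q y)]
  exact u_le hd q y

lemma U_sub (hd : d.IsStepOf c) (q : ℝ) (a b : ℝ) :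
    Uf c q b - Uf c q a = ∫ t in a..b, uf c q t := by
  have := intervalIntegral.integral_add_adjacent_intervals (u_intInt hd q 0 a) (u_intInt hd q a b)
  simp only [Uf]
  linarith

lemma U_mono (hd : d.IsStepOf c) (q : ℝ) : Monotone (Uf c q) := by
  intro a b hab
  have h := U_sub hd q a b
  have : 0 ≤ ∫ t in a..b, uf c q t :=
    intervalIntegral.integral_nonneg hab (fun x _ => u_nonneg hd q x)
  linarith

lemma U_lip (hd : d.IsStepOf c) (q : ℝ) (a b : ℝ) :
    |Uf c q b - Uf c q a| ≤ (rmin d)⁻¹ * |b - a| := by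
  rw [U_sub hd q, ← Real.norm_eq_abs]
  refine intervalIntegral.norm_integral_le_of_norm_le_const ?_
  intro y _
  rw [Real.norm_eq_abs, abs_of_nonneg (u_nonneg hd q y)]
  exact u_le hd q y

lemma U_integral_const (hd : d.IsStepOf c) (q : ℝ) {a b ρ : ℝ} (hab : a ≤ b)
    (hu : ∀ y ∈ Ioo a b, uf c q y = ρ) :
    Uf c q b - Uf c q a = ρ * (b - a) := by
  rw [U_sub hd q, intervalIntegral.integral_of_le hab, MeasureTheory.integral_Ioc_eq_integral_Ioo,
    MeasureTheory.setIntegral_congr_fun measurableSet_Ioo hu, MeasureTheory.setIntegral_const,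
    Real.volume_real_Ioo_of_le hab, smul_eq_mul]
  ring

lemma U_hasDerivWithinAt_right (hd : d.IsStepOf c) (q : ℝ) (x : ℝ) :
    ∃ ρ, HasDerivWithinAt (Uf c q) ρ (Ici x) x := by
  obtain ⟨ε, hε, ρc, hρc⟩ := c_const_right hd (x - q)
  refine ⟨ρc⁻¹, ?_⟩
  have haff : HasDerivAt (fun y => Uf c q x + ρc⁻¹ * (y - x)) ρc⁻¹ x := by
    simpa using (((hasDerivAt_id x).sub_const x).const_mul ρc⁻¹).const_add (Uf c q x)
  refine (haff.hasDerivWithinAt).congr_of_eventuallyEq ?_ (by simp)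
  have hmem : Ico x (x + ε) ∈ nhdsWithin x (Ici x) := by
    rw [← Ici_inter_Iio]
    exact Filter.inter_mem self_mem_nhdsWithin
      (mem_nhdsWithin_of_mem_nhds (Iio_mem_nhds (by linarith)))
  filter_upwards [hmem] with y hy
  have : Uf c q y - Uf c q x = ρc⁻¹ * (y - x) := by
    refine U_integral_const hd q hy.1 ?_
    intro t ht
    have : c (t - q) = ρc := by
      apply hρc
      constructor <;> [linarith [ht.1]; linarith [ht.2, hy.2]]
    simp [uf, this]
  linarith

lemma U_hasDerivWithinAt_left (hd : d.IsStepOf c) (q : ℝ) (x : ℝ) :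
    ∃ ρ, HasDerivWithinAt (Uf c q) ρ (Iic x) x := by
  obtain ⟨ε, hε, ρc, hρc⟩ := c_const_left hd (x - q)
  refine ⟨ρc⁻¹, ?_⟩
  have haff : HasDerivAt (fun y => Uf c q x + ρc⁻¹ * (y - x)) ρc⁻¹ x := by
    simpa using (((hasDerivAt_id x).sub_const x).const_mul ρc⁻¹).const_add (Uf c q x)
  refine (haff.hasDerivWithinAt).congr_of_eventuallyEq ?_ (by simp)
  have hmem : Ioc (x - ε) x ∈ nhdsWithin x (Iic x) := by
    rw [← Ioi_inter_Iic, Set.inter_comm]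
    exact Filter.inter_mem self_mem_nhdsWithin
      (mem_nhdsWithin_of_mem_nhds (Ioi_mem_nhds (by linarith)))
  filter_upwards [hmem] with y hy
  have : Uf c q x - Uf c q y = ρc⁻¹ * (x - y) := by
    refine U_integral_const hd q hy.2 ?_
    intro t ht
    have : c (t - q) = ρc := by
      apply hρc
      constructor <;> [linarith [ht.1, hy.1]; linarith [ht.2]]
    simp [uf, this]
  linarith

lemma U_hasDerivAt (hd : d.IsStepOf c) (q : ℝ) {x : ℝ} (hx : x - q ∉ Set.range d.a) :
    HasDerivAt (Uf c q) (uf c q x) x := by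
  have hev : ∀ᶠ y in nhds x, uf c q y = uf c q x := by
    have h1 : ∀ᶠ z in nhds (x - q), c z = c (x - q) := c_eventually_const hd hx
    have h2 : Filter.Tendsto (fun y : ℝ => y - q) (nhds x) (nhds (x - q)) :=
      (continuous_id.sub continuous_const).continuousAt
    filter_upwards [h2.eventually h1] with y hy
    simp [uf, hy]
  obtain ⟨ε, hε, hball⟩ := Metric.eventually_nhds_iff_ball.1 hev
  have haff : HasDerivAt (fun y => Uf c q x + uf c q x * (y - x)) (uf c q x) x := by
    simpa using (((hasDerivAt_id x).sub_const x).const_mul (uf c q x)).const_add (Uf c q x)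
  refine haff.congr_of_eventuallyEq ?_
  have hmem : Metric.ball x ε ∈ nhds x := Metric.ball_mem_nhds x hε
  filter_upwards [hmem] with y hy
  have key : ∀ z ∈ Ioo (min x y) (max x y), uf c q z = uf c q x := by
    intro z hz
    apply hball
    rw [Real.ball_eq_Ioo]
    rw [Real.ball_eq_Ioo] at hy
    rcases le_total x y with h | h
    · simp [h] at hz
      constructor <;> [linarith [hz.1]; linarith [hz.2, hy.2]]
    · simp [h] at hz
      constructor <;> [linarith [hz.1, hy.1]; linarith [hz.2]]
  rcases le_total x y with h | h
  · have := U_integral_const hd q h (by simpa [min_eq_left h, max_eq_right h] using key)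
    linarith
  · have := U_integral_const hd q h (by simpa [min_eq_right h, max_eq_left h] using key)
    linarith


lemma countable_of_isolated {s : Set ℝ}
    (h : ∀ x ∈ s, ∃ ε > (0:ℝ), ∀ y ∈ s, |y - x| < ε → y = x) : s.Countable := by
  have hdisc : DiscreteTopology s := by
    rw [discreteTopology_subtype_iff]
    intro x hx
    obtain ⟨ε, hε, hiso⟩ := h x hx
    rw [Filter.inf_principal_eq_bot]
    rw [mem_nhdsWithin]
    refine ⟨Metric.ball x ε, Metric.isOpen_ball, Metric.mem_ball_self hε, ?_⟩
    rintro y ⟨hy1, hy2⟩ hys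
    exact hy2 (hiso y hys (by simpa [Real.dist_eq] using hy1))
  exact (HereditarilyLindelofSpace.isHereditarilyLindelof_univ s (Set.subset_univ s)).countable hdisc

lemma sqrt_amgm {A B t : ℝ} (hA : 0 ≤ A) (hB : 0 ≤ B) (ht : 0 < t) :
    Real.sqrt (A * B) ≤ (t * A + B / t) / 2 := by
  have h1 : A * B = (t * A) * (B / t) := by field_simp
  rw [h1]
  have h2 : (t * A) * (B / t) ≤ ((t * A + B / t) / 2) ^ 2 := by
    nlinarith [sq_nonneg (t * A - B / t)]
  calc Real.sqrt ((t * A) * (B / t)) ≤ Real.sqrt (((t * A + B / t) / 2) ^ 2) :=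
        Real.sqrt_le_sqrt h2
    _ = (t * A + B / t) / 2 := Real.sqrt_sq (by positivity)

lemma gam_eq {v : ℝ × ℝ} (hv : v ∈ Wedge) :
    gam v = (v.1 + v.2) + v.2 + 2 * Real.sqrt ((v.1 + v.2) * v.2) := by
  obtain ⟨h1, h2⟩ := hv
  have ha : (0:ℝ) ≤ v.1 + v.2 := by linarith
  rw [gam, add_sq, Real.sq_sqrt ha, Real.sq_sqrt h1]
  rw [mul_assoc, show Real.sqrt (v.1 + v.2) * Real.sqrt v.2 = Real.sqrt ((v.1 + v.2) * v.2) from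
    (Real.sqrt_mul ha _).symm]
  ring

lemma gam_bound_A {v : ℝ × ℝ} (hv : v ∈ Wedge) {uval M : ℝ} (hu0 : 0 ≤ uval) (huM : uval ≤ M) :
    gam v * uval ≤ v.1 * uval + 2 * M * v.2 + 2 * M * Real.sqrt ((v.1 + v.2) * v.2) := by
  obtain ⟨h1, h2⟩ := hv
  rw [gam_eq ⟨h1, h2⟩]
  have hs : 0 ≤ Real.sqrt ((v.1 + v.2) * v.2) := Real.sqrt_nonneg _
  nlinarith

lemma gam_bound_B {v : ℝ × ℝ} (hv : v ∈ Wedge) {uval M : ℝ} (hu0 : 0 ≤ uval) (huM : uval ≤ M) :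
    gam v * uval ≤ 2 * M * (v.1 + v.2) - v.1 * uval + 2 * M * Real.sqrt ((v.1 + v.2) * v.2) := by
  obtain ⟨h1, h2⟩ := hv
  have ha : (0:ℝ) ≤ v.1 + v.2 := by linarith
  rw [gam_eq ⟨h1, h2⟩]
  have hs : 0 ≤ Real.sqrt ((v.1 + v.2) * v.2) := Real.sqrt_nonneg _
  nlinarith

section Piece

variable {d : StepSpeedData} {c : ℝ → ℝ}

lemma piece_hasDerivAt {f : ℝ → ℝ × ℝ} {σ τ : ℝ}
    (hcd : ContDiffOn ℝ 1 f (Icc σ τ)) {x : ℝ} (hx : x ∈ Ioo σ τ) :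
    HasDerivAt f (deriv f x) x := by
  have h1 : DifferentiableWithinAt ℝ f (Icc σ τ) x :=
    (hcd.differentiableOn one_ne_zero) x (Ioo_subset_Icc_self hx)
  exact (h1.differentiableAt (Icc_mem_nhds hx.1 hx.2)).hasDerivAt

lemma piece_intInt (hd : d.IsStepOf c) {f : ℝ → ℝ × ℝ} {σ τ : ℝ} (hστ : σ < τ)
    (hcd : ContDiffOn ℝ 1 f (Icc σ τ)) (g : ℝ × ℝ → ℝ) (hg : Continuous g)
    (v : ℝ → ℝ) (hv : Measurable v) (Mv : ℝ) (hvb : ∀ x, |v x| ≤ Mv) :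
    IntervalIntegrable (fun s => g (deriv f s) * v ((f s).1)) volume σ τ := by
  rw [intervalIntegrable_iff_integrableOn_Ioc_of_le hστ.le]
  have hfae : AEMeasurable f (volume.restrict (Ioc σ τ)) :=
    (hcd.continuousOn.mono Ioc_subset_Icc_self).aemeasurable measurableSet_Ioc
  have haesm : AEStronglyMeasurable (fun s => g (deriv f s) * v ((f s).1))
      (volume.restrict (Ioc σ τ)) := by
    refine AEMeasurable.aestronglyMeasurable ?_
    exact ((hg.measurable.comp (measurable_deriv f)).aemeasurable).mul
      (hv.comp_aemeasurable (measurable_fst.comp_aemeasurable hfae))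
  -- get bound
  have hdc : ContinuousOn (fun x => g (derivWithin f (Icc σ τ) x)) (Icc σ τ) :=
    hg.comp_continuousOn (hcd.continuousOn_derivWithin (uniqueDiffOn_Icc hστ) le_rfl)
  obtain ⟨K, hK⟩ := isCompact_Icc.exists_bound_of_continuousOn hdc
  have hKnn : 0 ≤ K := le_trans (norm_nonneg _) (hK σ (left_mem_Icc.2 hστ.le))
  have hderiv_eq : ∀ x ∈ Ioo σ τ, deriv f x = derivWithin f (Icc σ τ) x := by
    intro x hx
    exact (derivWithin_of_mem_nhds (Icc_mem_nhds hx.1 hx.2)).symm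
  refine MeasureTheory.Integrable.mono' (g := fun _ => K * Mv)
    (MeasureTheory.integrableOn_const measure_Ioc_lt_top.ne) haesm ?_
  have h1 : ∀ᵐ x ∂volume.restrict (Ioc σ τ), x ∈ Ioc σ τ := ae_restrict_mem measurableSet_Ioc
  have h2 : ∀ᵐ x ∂volume.restrict (Ioc σ τ), x ≠ τ := by
    refine ae_restrict_of_ae ?_
    have : volume ({τ} : Set ℝ) = 0 := Real.volume_singleton
    rw [MeasureTheory.ae_iff]
    simpa using this
  filter_upwards [h1, h2] with x hx hxn
  have hxo : x ∈ Ioo σ τ := ⟨hx.1, lt_of_le_of_ne hx.2 hxn⟩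
  rw [Real.norm_eq_abs, abs_mul]
  have hb1 : |g (deriv f x)| ≤ K := by
    rw [hderiv_eq x hxo, ← Real.norm_eq_abs]
    exact hK x (Ioo_subset_Icc_self hxo)
  exact mul_le_mul hb1 (hvb _) (abs_nonneg _) hKnn

lemma piece_ftc_comp (hd : d.IsStepOf c) {f : ℝ → ℝ × ℝ} {σ τ : ℝ} (hστ : σ < τ)
    (hcd : ContDiffOn ℝ 1 f (Icc σ τ)) (L : (ℝ × ℝ) →L[ℝ] ℝ) :
    ∫ s in σ..τ, L (deriv f s) = L (f τ) - L (f σ) := by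
  have hint : IntervalIntegrable (fun s => L (deriv f s)) volume σ τ := by
    have := piece_intInt hd hστ hcd (fun p => L p) L.continuous (fun _ => (1:ℝ))
      measurable_const 1 (by norm_num)
    simpa using this
  refine intervalIntegral.integral_eq_sub_of_hasDeriv_right_of_le hστ.le
    (L.continuous.comp_continuousOn hcd.continuousOn) (fun x hx => ?_) hint
  exact ((L.hasFDerivAt.comp_hasDerivAt x (piece_hasDerivAt hcd hx)).hasDerivWithinAt)


lemma piece_Uftc (hd : d.IsStepOf c) (q : ℝ) {f : ℝ → ℝ × ℝ} {σ τ : ℝ} (hστ : σ < τ)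
    (hcd : ContDiffOn ℝ 1 f (Icc σ τ)) :
    ∫ s in σ..τ, (deriv f s).1 * uf c q ((f s).1)
      = Uf c q ((f τ).1) - Uf c q ((f σ).1) := by
  set M := (rmin d)⁻¹ with hM
  have hMpos : 0 < M := inv_pos.2 (rmin_pos d)
  set φ : ℝ → ℝ := fun s => (deriv f s).1 * uf c q ((f s).1) with hφ
  have hf1 : ∀ x ∈ Ioo σ τ, HasDerivAt (fun s => (f s).1) ((deriv f x).1) x := by
    intro x hx
    have := (ContinuousLinearMap.fst ℝ ℝ ℝ).hasFDerivAt.comp_hasDerivAt x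
      (piece_hasDerivAt hcd hx)
    exact this
  set Bad : Set ℝ := {t | t ∈ Ioo σ τ ∧ (f t).1 - q ∈ Set.range d.a ∧ (deriv f t).1 ≠ 0}
    with hBadDef
  have hBadc : Bad.Countable := by
    have hsub : Bad ⊆ ⋃ j : Fin d.N,
        {t | t ∈ Ioo σ τ ∧ (f t).1 = d.a j + q ∧ (deriv f t).1 ≠ 0} := by
      rintro t ⟨ht, ⟨j, hj⟩, hw⟩
      exact Set.mem_iUnion.2 ⟨j, ht, by linarith, hw⟩
    refine Set.Countable.mono hsub (Set.countable_iUnion fun j => ?_)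
    apply countable_of_isolated
    rintro t ⟨ht, hft, hw⟩
    have hlo := (hasDerivAt_iff_isLittleO.1 (hf1 t ht)).def
      (show (0:ℝ) < |(deriv f t).1| / 2 by positivity)
    rw [Metric.eventually_nhds_iff_ball] at hlo
    obtain ⟨ε, hε, hb⟩ := hlo
    refine ⟨ε, hε, ?_⟩
    rintro y ⟨_, hfy, _⟩ hyd
    by_contra hne
    have h3 := hb y (by simpa [Real.dist_eq] using hyd)
    rw [hfy, hft] at h3
    simp only [sub_self, zero_sub, norm_neg, Real.norm_eq_abs, smul_eq_mul, abs_mul] at h3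
    have h4 : 0 < |y - t| := abs_pos.2 (sub_ne_zero.2 hne)
    have h5 : 0 < |(deriv f t).1| := abs_pos.2 hw
    nlinarith
  have hg_cont : Continuous (Uf c q) := by
    have hl : LipschitzWith (Real.toNNReal M) (Uf c q) := by
      refine LipschitzWith.of_dist_le_mul fun a b => ?_
      rw [Real.dist_eq, Real.dist_eq, Real.coe_toNNReal _ hMpos.le]
      exact U_lip hd q b a
    exact hl.continuous
  have hKey : ∀ t ∈ Ioo σ τ, ∃ ρ, HasDerivWithinAt (fun s => Uf c q ((f s).1)) ρ (Ioi t) t ∧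
      (t ∉ Bad → ρ = φ t) := by
    intro t ht
    by_cases hreg : (f t).1 - q ∈ Set.range d.a
    · by_cases hw0 : (deriv f t).1 = 0
      · refine ⟨0, ?_, fun _ => by rw [hφ]; simp [hw0]⟩
        have hlo : (fun y => (f y).1 - (f t).1) =o[nhds t] fun y => y - t := by
          have h := hasDerivAt_iff_isLittleO.1 (hf1 t ht)
          rw [hw0] at h
          simpa using h
        have hbig : (fun y => Uf c q ((f y).1) - Uf c q ((f t).1)) =O[nhds t]
            fun y => (f y).1 - (f t).1 := by
          refine Asymptotics.IsBigO.of_bound M (Filter.Eventually.of_forall fun y => ?_)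
          rw [Real.norm_eq_abs, Real.norm_eq_abs]
          calc |Uf c q ((f y).1) - Uf c q ((f t).1)| ≤ M * |(f y).1 - (f t).1| :=
                U_lip hd q _ _
            _ = M * |(f y).1 - (f t).1| := rfl
        have hfin : (fun y => Uf c q ((f y).1) - Uf c q ((f t).1)) =o[nhds t]
            fun y => y - t := hbig.trans_isLittleO hlo
        have hda : HasDerivAt (fun s => Uf c q ((f s).1)) 0 t := by
          rw [hasDerivAt_iff_isLittleO]
          simpa using hfin
        exact hda.hasDerivWithinAt
      · have htBad : t ∈ Bad := ⟨ht, hreg, hw0⟩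
        rcases lt_or_gt_of_ne hw0 with hneg | hpos
        · -- negative derivative: map to the left
          obtain ⟨ρU, hρU⟩ := U_hasDerivWithinAt_left hd q ((f t).1)
          have hlo := (hasDerivAt_iff_isLittleO.1 (hf1 t ht)).def
            (show (0:ℝ) < -(deriv f t).1 / 2 by linarith)
          rw [Metric.eventually_nhds_iff_ball] at hlo
          obtain ⟨ε, hε, hb⟩ := hlo
          have hmaps : Set.MapsTo (fun s => (f s).1) (Ioi t ∩ Metric.ball t ε)
              (Iic ((f t).1)) := by
            rintro y ⟨hy1, hy2⟩
            have h3 := hb y hy2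
            rw [Real.norm_eq_abs, Real.norm_eq_abs, smul_eq_mul] at h3
            have h4 : |y - t| = y - t := abs_of_pos (sub_pos.2 hy1)
            rw [h4] at h3
            have h6 := (abs_le.1 h3).2
            simp only [Set.mem_Iic]
            nlinarith [sub_pos.2 (show t < y from hy1)]
          have hcomp := HasDerivWithinAt.comp t hρU
            ((hf1 t ht).hasDerivWithinAt) hmaps
          refine ⟨ρU * (deriv f t).1, ?_, fun hnb => absurd htBad hnb⟩
          exact hcomp.mono_of_mem_nhdsWithin (Filter.inter_mem self_mem_nhdsWithin
            (mem_nhdsWithin_of_mem_nhds (Metric.ball_mem_nhds t hε)))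
        · obtain ⟨ρU, hρU⟩ := U_hasDerivWithinAt_right hd q ((f t).1)
          have hlo := (hasDerivAt_iff_isLittleO.1 (hf1 t ht)).def
            (show (0:ℝ) < (deriv f t).1 / 2 by linarith)
          rw [Metric.eventually_nhds_iff_ball] at hlo
          obtain ⟨ε, hε, hb⟩ := hlo
          have hmaps : Set.MapsTo (fun s => (f s).1) (Ioi t ∩ Metric.ball t ε)
              (Ici ((f t).1)) := by
            rintro y ⟨hy1, hy2⟩
            have h3 := hb y hy2
            rw [Real.norm_eq_abs, Real.norm_eq_abs, smul_eq_mul] at h3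
            have h4 : |y - t| = y - t := abs_of_pos (sub_pos.2 hy1)
            rw [h4] at h3
            have h6 := (abs_le.1 h3).1
            simp only [Set.mem_Ici]
            nlinarith [sub_pos.2 (show t < y from hy1)]
          have hcomp := HasDerivWithinAt.comp t hρU
            ((hf1 t ht).hasDerivWithinAt) hmaps
          refine ⟨ρU * (deriv f t).1, ?_, fun hnb => absurd htBad hnb⟩
          exact hcomp.mono_of_mem_nhdsWithin (Filter.inter_mem self_mem_nhdsWithin
            (mem_nhdsWithin_of_mem_nhds (Metric.ball_mem_nhds t hε)))
    · refine ⟨uf c q ((f t).1) * (deriv f t).1, ?_, fun _ => mul_comm _ _⟩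
      have hU := U_hasDerivAt hd q hreg
      exact (hU.comp t (hf1 t ht)).hasDerivWithinAt
  choose! ρfun hρ1 hρ2 using hKey
  have hint_φ : IntervalIntegrable φ volume σ τ := by
    refine piece_intInt hd hστ hcd (fun p => p.1) continuous_fst (uf c q) (u_meas hd q) M
      (fun x => ?_)
    rw [abs_of_nonneg (u_nonneg hd q x)]
    exact u_le hd q x
  have hae_eq : ∀ᵐ x ∂(volume : Measure ℝ), x ∈ Set.uIoc σ τ → φ x = ρfun x := by
    have hnull : (volume : Measure ℝ) (Bad ∪ {τ}) = 0 :=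
      measure_union_null (hBadc.measure_zero _) Real.volume_singleton
    rw [MeasureTheory.ae_iff]
    refine measure_mono_null ?_ hnull
    intro x hx
    simp only [Set.mem_setOf_eq, not_forall] at hx
    obtain ⟨hx1, hx2⟩ := hx
    by_contra hxn
    simp only [Set.mem_union, Set.mem_singleton_iff, not_or] at hxn
    obtain ⟨hxb, hxt⟩ := hxn
    rw [Set.uIoc_of_le hστ.le] at hx1
    have hxo : x ∈ Ioo σ τ := ⟨hx1.1, lt_of_le_of_ne hx1.2 hxt⟩
    exact hx2 ((hρ2 x hxo hxb).symm)
  have h_int_ρ : IntervalIntegrable ρfun volume σ τ := by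
    rw [intervalIntegrable_iff_integrableOn_Ioc_of_le hστ.le] at hint_φ ⊢
    refine hint_φ.congr ?_
    have h1 := ae_restrict_of_ae (s := Ioc σ τ) (μ := (volume : Measure ℝ)) hae_eq
    have h2 : ∀ᵐ x ∂(volume : Measure ℝ).restrict (Ioc σ τ), x ∈ Ioc σ τ :=
      ae_restrict_mem measurableSet_Ioc
    filter_upwards [h1, h2] with x hx1 hx2
    exact hx1 (by rwa [Set.uIoc_of_le hστ.le])
  have hIccInt : MeasureTheory.IntegrableOn ρfun (Icc σ τ) volume := by
    rw [integrableOn_Icc_iff_integrableOn_Ioc]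
    exact (intervalIntegrable_iff_integrableOn_Ioc_of_le hστ.le).1 h_int_ρ
  have hgcont : ContinuousOn (fun s => Uf c q ((f s).1)) (Icc σ τ) :=
    hg_cont.comp_continuousOn (continuous_fst.comp_continuousOn hcd.continuousOn)
  have le1 := intervalIntegral.integral_le_sub_of_hasDeriv_right_of_le hστ.le hgcont
    (fun x hx => hρ1 x hx) hIccInt (fun x hx => le_rfl)
  have le2 := intervalIntegral.sub_le_integral_of_hasDeriv_right_of_le hστ.le hgcont
    (fun x hx => hρ1 x hx) hIccInt (fun x hx => le_rfl)
  have hval : ∫ y in σ..τ, ρfun y = Uf c q ((f τ).1) - Uf c q ((f σ).1) :=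
    le_antisymm le1 le2
  rw [← hval]
  exact intervalIntegral.integral_congr_ae hae_eq


lemma intervalIntegral_mono_ioo {g h : ℝ → ℝ} {σ τ : ℝ} (hστ : σ ≤ τ)
    (hg : IntervalIntegrable g volume σ τ) (hh : IntervalIntegrable h volume σ τ)
    (hle : ∀ x ∈ Ioo σ τ, g x ≤ h x) : ∫ s in σ..τ, g s ≤ ∫ s in σ..τ, h s := by
  rw [intervalIntegral.integral_of_le hστ, intervalIntegral.integral_of_le hστ,
    MeasureTheory.integral_Ioc_eq_integral_Ioo, MeasureTheory.integral_Ioc_eq_integral_Ioo]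
  refine MeasureTheory.setIntegral_mono_on
    (((intervalIntegrable_iff_integrableOn_Ioc_of_le hστ).1 hg).mono_set Ioo_subset_Ioc_self)
    (((intervalIntegrable_iff_integrableOn_Ioc_of_le hστ).1 hh).mono_set Ioo_subset_Ioc_self)
    measurableSet_Ioo hle

lemma piece_bound (hd : d.IsStepOf c) (q : ℝ) {f : ℝ → ℝ × ℝ} {σ τ : ℝ} (hστ : σ < τ)
    (hcd : ContDiffOn ℝ 1 f (Icc σ τ))
    (hW : ∀ s ∈ Ioo σ τ, deriv f s ∈ Wedge) {t : ℝ} (ht : 0 < t) :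
    (∫ s in σ..τ, gam (deriv f s) * uf c q ((f s).1)
       ≤ (Uf c q (f τ).1 - Uf c q (f σ).1) + 2 * (rmin d)⁻¹ * ((f τ).2 - (f σ).2)
         + (rmin d)⁻¹ * t * (((f τ).1 + (f τ).2) - ((f σ).1 + (f σ).2))
         + (rmin d)⁻¹ / t * ((f τ).2 - (f σ).2))
    ∧ (∫ s in σ..τ, gam (deriv f s) * uf c q ((f s).1)
       ≤ 2 * (rmin d)⁻¹ * (((f τ).1 + (f τ).2) - ((f σ).1 + (f σ).2))
         - (Uf c q (f τ).1 - Uf c q (f σ).1)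
         + (rmin d)⁻¹ * t * (((f τ).1 + (f τ).2) - ((f σ).1 + (f σ).2))
         + (rmin d)⁻¹ / t * ((f τ).2 - (f σ).2)) := by
  set M := (rmin d)⁻¹ with hM
  have hMpos : 0 < M := inv_pos.2 (rmin_pos d)
  have hub : ∀ x, |uf c q x| ≤ M := fun x => by
    rw [abs_of_nonneg (u_nonneg hd q x)]; exact u_le hd q x
  have h1b : ∀ x : ℝ, |(1:ℝ)| ≤ 1 := fun x => by norm_num
  -- integrability of all pieces
  have hIφ : IntervalIntegrable (fun s => (deriv f s).1 * uf c q ((f s).1)) volume σ τ :=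
    piece_intInt hd hστ hcd (fun p => p.1) continuous_fst (uf c q) (u_meas hd q) M hub
  have hIB : IntervalIntegrable (fun s => (deriv f s).2) volume σ τ := by
    have := piece_intInt hd hστ hcd (fun p => p.2) continuous_snd (fun _ => (1:ℝ))
      measurable_const 1 h1b
    simpa using this
  have hIA : IntervalIntegrable (fun s => (deriv f s).1 + (deriv f s).2) volume σ τ := by
    have := piece_intInt hd hστ hcd (fun p => p.1 + p.2) (continuous_fst.add continuous_snd)
      (fun _ => (1:ℝ)) measurable_const 1 h1b
    simpa using this
  have hsqc : Continuous (fun p : ℝ × ℝ => Real.sqrt ((p.1 + p.2) * p.2)) :=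
    Real.continuous_sqrt.comp ((continuous_fst.add continuous_snd).mul continuous_snd)
  have hIS : IntervalIntegrable (fun s => Real.sqrt (((deriv f s).1 + (deriv f s).2)
      * (deriv f s).2)) volume σ τ := by
    have := piece_intInt hd hστ hcd (fun p => Real.sqrt ((p.1 + p.2) * p.2)) hsqc
      (fun _ => (1:ℝ)) measurable_const 1 h1b
    simpa using this
  have hgamc : Continuous gam := by
    unfold gam
    exact ((Real.continuous_sqrt.comp (continuous_fst.add continuous_snd)).add
      (Real.continuous_sqrt.comp continuous_snd)).pow 2
  have hIgam : IntervalIntegrable (fun s => gam (deriv f s) * uf c q ((f s).1)) volume σ τ :=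
    piece_intInt hd hστ hcd gam hgamc (uf c q) (u_meas hd q) M hub
  -- FTC values
  have I1 : ∫ s in σ..τ, (deriv f s).1 * uf c q ((f s).1)
      = Uf c q ((f τ).1) - Uf c q ((f σ).1) := piece_Uftc hd q hστ hcd
  have I2 : ∫ s in σ..τ, (deriv f s).2 = (f τ).2 - (f σ).2 := by
    have := piece_ftc_comp hd hστ hcd (ContinuousLinearMap.snd ℝ ℝ ℝ)
    simpa using this
  have I3 : ∫ s in σ..τ, ((deriv f s).1 + (deriv f s).2)
      = ((f τ).1 + (f τ).2) - ((f σ).1 + (f σ).2) := by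
    have := piece_ftc_comp hd hστ hcd
      (ContinuousLinearMap.fst ℝ ℝ ℝ + ContinuousLinearMap.snd ℝ ℝ ℝ)
    simpa [ContinuousLinearMap.add_apply] using this
  -- sqrt integral bound
  have hSbound : ∫ s in σ..τ, Real.sqrt (((deriv f s).1 + (deriv f s).2) * (deriv f s).2)
      ≤ (t / 2) * (((f τ).1 + (f τ).2) - ((f σ).1 + (f σ).2))
        + (1 / (2 * t)) * ((f τ).2 - (f σ).2) := by
    have hmono := intervalIntegral_mono_ioo hστ.le hIS
      ((hIA.const_mul (t / 2)).add (hIB.const_mul (1 / (2 * t))))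
      (fun x hx => ?_)
    · calc ∫ s in σ..τ, Real.sqrt (((deriv f s).1 + (deriv f s).2) * (deriv f s).2)
          ≤ ∫ s in σ..τ, ((t / 2) * ((deriv f s).1 + (deriv f s).2)
              + (1 / (2 * t)) * (deriv f s).2) := hmono
        _ = (t / 2) * (((f τ).1 + (f τ).2) - ((f σ).1 + (f σ).2))
              + (1 / (2 * t)) * ((f τ).2 - (f σ).2) := by
            rw [intervalIntegral.integral_add (hIA.const_mul (t / 2))
              (hIB.const_mul (1 / (2 * t))), intervalIntegral.integral_const_mul,
              intervalIntegral.integral_const_mul, I2, I3]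
    · obtain ⟨hw1, hw2⟩ := hW x hx
      have hA : (0:ℝ) ≤ (deriv f x).1 + (deriv f x).2 := by
        have hw2' : -(deriv f x).2 ≤ (deriv f x).1 := hw2
        linarith
      have := sqrt_amgm hA hw1 ht
      calc Real.sqrt (((deriv f x).1 + (deriv f x).2) * (deriv f x).2)
          ≤ (t * ((deriv f x).1 + (deriv f x).2) + (deriv f x).2 / t) / 2 := this
        _ = (t / 2) * ((deriv f x).1 + (deriv f x).2) + (1 / (2 * t)) * (deriv f x).2 := by
            field_simp
  constructor
  · -- version A
    have hmono := intervalIntegral_mono_ioo hστ.le hIgam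
      ((hIφ.add (hIB.const_mul (2 * M))).add (hIS.const_mul (2 * M)))
      (fun x hx => ?_)
    · have heq : ∫ s in σ..τ, (((deriv f s).1 * uf c q ((f s).1)
          + 2 * M * (deriv f s).2)
          + 2 * M * Real.sqrt (((deriv f s).1 + (deriv f s).2) * (deriv f s).2))
          = (Uf c q ((f τ).1) - Uf c q ((f σ).1)) + 2 * M * ((f τ).2 - (f σ).2)
            + 2 * M * ∫ s in σ..τ,
              Real.sqrt (((deriv f s).1 + (deriv f s).2) * (deriv f s).2) := by
        rw [intervalIntegral.integral_add (hIφ.add (hIB.const_mul (2 * M)))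
          (hIS.const_mul (2 * M)), intervalIntegral.integral_add hIφ (hIB.const_mul (2 * M)),
          intervalIntegral.integral_const_mul, intervalIntegral.integral_const_mul, I1, I2]
      rw [heq] at hmono
      have h3 := mul_le_mul_of_nonneg_left hSbound (by positivity : (0:ℝ) ≤ 2 * M)
      have h4 : 2 * M * (t / 2 * (((f τ).1 + (f τ).2) - ((f σ).1 + (f σ).2))
          + 1 / (2 * t) * ((f τ).2 - (f σ).2))
          = M * t * (((f τ).1 + (f τ).2) - ((f σ).1 + (f σ).2))
            + M / t * ((f τ).2 - (f σ).2) := by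
        field_simp
      linarith
    · have hA := gam_bound_A (hW x hx) (u_nonneg hd q ((f x).1)) (u_le hd q ((f x).1))
      rw [← hM] at hA
      linarith
  · -- version B
    have hmono := intervalIntegral_mono_ioo hστ.le hIgam
      (((hIA.const_mul (2 * M)).sub hIφ).add (hIS.const_mul (2 * M)))
      (fun x hx => ?_)
    · have heq : ∫ s in σ..τ, ((2 * M * ((deriv f s).1 + (deriv f s).2)
          - (deriv f s).1 * uf c q ((f s).1))
          + 2 * M * Real.sqrt (((deriv f s).1 + (deriv f s).2) * (deriv f s).2))
          = 2 * M * (((f τ).1 + (f τ).2) - ((f σ).1 + (f σ).2))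
            - (Uf c q ((f τ).1) - Uf c q ((f σ).1))
            + 2 * M * ∫ s in σ..τ,
              Real.sqrt (((deriv f s).1 + (deriv f s).2) * (deriv f s).2) := by
        rw [intervalIntegral.integral_add ((hIA.const_mul (2 * M)).sub hIφ)
          (hIS.const_mul (2 * M)), intervalIntegral.integral_sub (hIA.const_mul (2 * M)) hIφ,
          intervalIntegral.integral_const_mul, intervalIntegral.integral_const_mul, I1, I3]
      rw [heq] at hmono
      have h3 := mul_le_mul_of_nonneg_left hSbound (by positivity : (0:ℝ) ≤ 2 * M)
      have h4 : 2 * M * (t / 2 * (((f τ).1 + (f τ).2) - ((f σ).1 + (f σ).2))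
          + 1 / (2 * t) * ((f τ).2 - (f σ).2))
          = M * t * (((f τ).1 + (f τ).2) - ((f σ).1 + (f σ).2))
            + M / t * ((f τ).2 - (f σ).2) := by
        field_simp
      linarith
    · have hB := gam_bound_B (hW x hx) (u_nonneg hd q ((f x).1)) (u_le hd q ((f x).1))
      rw [← hM] at hB
      linarith

end Piece




section Path

variable {d : StepSpeedData} {c : ℝ → ℝ}

lemma path_bound (hd : d.IsStepOf c) (q : ℝ) {p₀ p₁ : ℝ × ℝ} {f : ℝ → ℝ × ℝ}
    (hf : IsWedgePath p₀ p₁ f) {t : ℝ} (ht : 0 < t) :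
    (wPathIntegral c q f ≤ (Uf c q p₁.1 - Uf c q p₀.1) + 2 * (rmin d)⁻¹ * (p₁.2 - p₀.2)
       + (rmin d)⁻¹ * t * ((p₁.1 + p₁.2) - (p₀.1 + p₀.2))
       + (rmin d)⁻¹ / t * (p₁.2 - p₀.2))
    ∧ (wPathIntegral c q f ≤ 2 * (rmin d)⁻¹ * ((p₁.1 + p₁.2) - (p₀.1 + p₀.2))
       - (Uf c q p₁.1 - Uf c q p₀.1)
       + (rmin d)⁻¹ * t * ((p₁.1 + p₁.2) - (p₀.1 + p₀.2))
       + (rmin d)⁻¹ / t * (p₁.2 - p₀.2)) := by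
  set M := (rmin d)⁻¹ with hM
  obtain ⟨hcont, hf0, hf1, k, s, hsm, hs0, hsl, hpieces⟩ := hf
  have hwp : wPathIntegral c q f = ∫ x in (0:ℝ)..1, gam (deriv f x) * uf c q ((f x).1) := by
    simp only [wPathIntegral, div_eq_mul_inv, uf]
  set a : ℕ → ℝ := fun n => s ⟨min n k, Nat.lt_succ_of_le (min_le_right n k)⟩ with ha
  have key : ∀ i, i < k → a i < a (i + 1) ∧ ContDiffOn ℝ 1 f (Icc (a i) (a (i + 1)))
      ∧ (∀ x ∈ Ioo (a i) (a (i + 1)), deriv f x ∈ Wedge) := by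
    intro i hik
    have e1 : a i = s ((⟨i, hik⟩ : Fin k).castSucc) := by
      simp only [ha]
      congr 1
      exact Fin.ext (by simp [Nat.min_eq_left hik.le])
    have e2 : a (i + 1) = s ((⟨i, hik⟩ : Fin k).succ) := by
      simp only [ha]
      congr 1
      exact Fin.ext (by simp [Nat.min_eq_left (Nat.succ_le_of_lt hik)])
    obtain ⟨hcd, hW⟩ := hpieces ⟨i, hik⟩
    rw [e1, e2]
    exact ⟨hsm Fin.castSucc_lt_succ, hcd, hW⟩
  have ha0 : a 0 = 0 := by
    have : (⟨min 0 k, Nat.lt_succ_of_le (min_le_right 0 k)⟩ : Fin (k + 1)) = 0 :=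
      Fin.ext (by simp)
    rw [ha]
    simpa [this] using hs0
  have hak : a k = 1 := by
    have : (⟨min k k, Nat.lt_succ_of_le (min_le_right k k)⟩ : Fin (k + 1)) = Fin.last k :=
      Fin.ext (by simp)
    rw [ha]
    exact (congrArg s this).trans hsl
  have hub : ∀ x, |uf c q x| ≤ M := fun x => by
    rw [abs_of_nonneg (u_nonneg hd q x)]; exact u_le hd q x
  have hgamc : Continuous gam := by
    unfold gam
    exact ((Real.continuous_sqrt.comp (continuous_fst.add continuous_snd)).add
      (Real.continuous_sqrt.comp continuous_snd)).pow 2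
  have hint : ∀ i < k, IntervalIntegrable (fun x => gam (deriv f x) * uf c q ((f x).1))
      volume (a i) (a (i + 1)) := by
    intro i hik
    obtain ⟨hlt, hcd, _⟩ := key i hik
    exact piece_intInt hd hlt hcd gam hgamc (uf c q) (u_meas hd q) M hub
  have hsum := intervalIntegral.sum_integral_adjacent_intervals hint
  rw [ha0, hak] at hsum
  rw [hwp, ← hsum]
  constructor
  · set GA : ℝ × ℝ → ℝ := fun p => Uf c q p.1 + 2 * M * p.2 + M * t * (p.1 + p.2)
      + M / t * p.2 with hGA
    have hpce : ∀ i ∈ Finset.range k,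
        (∫ x in a i..a (i + 1), gam (deriv f x) * uf c q ((f x).1))
          ≤ GA (f (a (i + 1))) - GA (f (a i)) := by
      intro i hik
      rw [Finset.mem_range] at hik
      obtain ⟨hlt, hcd, hW⟩ := key i hik
      have hb := (piece_bound hd q hlt hcd hW ht).1
      rw [← hM] at hb
      refine le_trans hb (le_of_eq ?_)
      simp only [hGA]
      ring
    have hle := Finset.sum_le_sum hpce
    have htel : ∑ i ∈ Finset.range k, (GA (f (a (i + 1))) - GA (f (a i)))
        = GA (f 1) - GA (f 0) := by
      have := Finset.sum_range_sub (fun n => GA (f (a n))) k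
      simpa [ha0, hak] using this
    rw [htel, hf0, hf1] at hle
    refine le_trans hle (le_of_eq ?_)
    simp only [hGA]
    ring
  · set GB : ℝ × ℝ → ℝ := fun p => 2 * M * (p.1 + p.2) - Uf c q p.1 + M * t * (p.1 + p.2)
      + M / t * p.2 with hGB
    have hpce : ∀ i ∈ Finset.range k,
        (∫ x in a i..a (i + 1), gam (deriv f x) * uf c q ((f x).1))
          ≤ GB (f (a (i + 1))) - GB (f (a i)) := by
      intro i hik
      rw [Finset.mem_range] at hik
      obtain ⟨hlt, hcd, hW⟩ := key i hik
      have hb := (piece_bound hd q hlt hcd hW ht).2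
      rw [← hM] at hb
      refine le_trans hb (le_of_eq ?_)
      simp only [hGB]
      ring
    have hle := Finset.sum_le_sum hpce
    have htel : ∑ i ∈ Finset.range k, (GB (f (a (i + 1))) - GB (f (a i)))
        = GB (f 1) - GB (f 0) := by
      have := Finset.sum_range_sub (fun n => GB (f (a n))) k
      simpa [ha0, hak] using this
    rw [htel, hf0, hf1] at hle
    refine le_trans hle (le_of_eq ?_)
    simp only [hGB]
    ring

end Path


section Straight

variable {d : StepSpeedData} {c : ℝ → ℝ}

/-- straight-line path -/
def straightPath (p₀ p₁ : ℝ × ℝ) : ℝ → ℝ × ℝ :=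
  fun s => (p₀.1 + s * (p₁.1 - p₀.1), p₀.2 + s * (p₁.2 - p₀.2))

lemma straight_hasDerivAt (p₀ p₁ : ℝ × ℝ) (x : ℝ) :
    HasDerivAt (straightPath p₀ p₁) (p₁.1 - p₀.1, p₁.2 - p₀.2) x := by
  have h1 : HasDerivAt (fun s : ℝ => p₀.1 + s * (p₁.1 - p₀.1)) (p₁.1 - p₀.1) x := by
    simpa using ((hasDerivAt_id x).mul_const (p₁.1 - p₀.1)).const_add p₀.1
  have h2 : HasDerivAt (fun s : ℝ => p₀.2 + s * (p₁.2 - p₀.2)) (p₁.2 - p₀.2) x := by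
    simpa using ((hasDerivAt_id x).mul_const (p₁.2 - p₀.2)).const_add p₀.2
  exact h1.prodMk h2

lemma straight_deriv (p₀ p₁ : ℝ × ℝ) (x : ℝ) :
    deriv (straightPath p₀ p₁) x = (p₁.1 - p₀.1, p₁.2 - p₀.2) :=
  (straight_hasDerivAt p₀ p₁ x).deriv

lemma straight_isWedgePath {p₀ p₁ : ℝ × ℝ} (h2 : 0 ≤ p₁.2 - p₀.2)
    (h1 : -(p₁.2 - p₀.2) ≤ p₁.1 - p₀.1) : IsWedgePath p₀ p₁ (straightPath p₀ p₁) := by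
  have hcd : ContDiff ℝ 1 (straightPath p₀ p₁) := by
    apply ContDiff.prodMk
    · exact contDiff_const.add (contDiff_id.mul contDiff_const)
    · exact contDiff_const.add (contDiff_id.mul contDiff_const)
  refine ⟨hcd.continuous.continuousOn, ?_, ?_, 1, ![0, 1], ?_, ?_, ?_, ?_⟩
  · simp [straightPath]
  · refine Prod.ext ?_ ?_ <;> simp [straightPath]
  · rw [Fin.strictMono_iff_lt_succ]
    intro i
    fin_cases i
    norm_num
  · simp
  · simp [Fin.last]
  · intro i
    refine ⟨hcd.contDiffOn, fun x _ => ?_⟩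
    rw [straight_deriv]
    exact ⟨h2, h1⟩

lemma straight_integral_eq (hd : d.IsStepOf c) (q : ℝ) (p₀ p₁ : ℝ × ℝ)
    (hne : p₁.1 - p₀.1 ≠ 0) :
    wPathIntegral c q (straightPath p₀ p₁)
      = gam (p₁.1 - p₀.1, p₁.2 - p₀.2)
        * ((p₁.1 - p₀.1)⁻¹ * (Uf c q p₁.1 - Uf c q p₀.1)) := by
  have h1 : wPathIntegral c q (straightPath p₀ p₁)
      = ∫ x in (0:ℝ)..1, gam (p₁.1 - p₀.1, p₁.2 - p₀.2)
          * uf c q ((p₁.1 - p₀.1) * x + p₀.1) := by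
    simp only [wPathIntegral, div_eq_mul_inv]
    refine intervalIntegral.integral_congr fun x _ => ?_
    rw [straight_deriv]
    have : (straightPath p₀ p₁ x).1 = (p₁.1 - p₀.1) * x + p₀.1 := by
      simp [straightPath]; ring
    rw [this]
    rfl
  rw [h1, intervalIntegral.integral_const_mul,
    intervalIntegral.integral_comp_mul_add (uf c q) hne p₀.1]
  have he1 : (p₁.1 - p₀.1) * 0 + p₀.1 = p₀.1 := by ring
  have he2 : (p₁.1 - p₀.1) * 1 + p₀.1 = p₁.1 := by ring
  rw [he1, he2, smul_eq_mul, ← U_sub hd q]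

lemma straight_const_value (hd : d.IsStepOf c) (q : ℝ) (p₀ p₁ : ℝ × ℝ)
    (h1 : p₁.1 = p₀.1) (h2 : p₁.2 = p₀.2) :
    wPathIntegral c q (straightPath p₀ p₁) = 0 := by
  have : wPathIntegral c q (straightPath p₀ p₁) = ∫ x in (0:ℝ)..1, (0:ℝ) := by
    simp only [wPathIntegral, div_eq_mul_inv]
    refine intervalIntegral.integral_congr fun x _ => ?_
    rw [straight_deriv, h1, h2]
    simp [gam]
  simpa using this

lemma straight_value_horiz (hd : d.IsStepOf c) (q : ℝ) {A z : ℝ} (hAz : A ≤ z) :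
    ∃ f, IsWedgePath (A, 0) (z, 0) f ∧ wPathIntegral c q f = Uf c q z - Uf c q A := by
  refine ⟨straightPath (A, 0) (z, 0), straight_isWedgePath (by norm_num) (by norm_num; linarith), ?_⟩
  rcases eq_or_lt_of_le hAz with heq | hlt
  · rw [straight_const_value hd q _ _ (by simp [heq.symm]) (by simp)]
    rw [heq]
    ring
  · have hne : (z, (0:ℝ)).1 - (A, (0:ℝ)).1 ≠ 0 := by simp; linarith
    rw [straight_integral_eq hd q _ _ hne]
    have hg : gam ((z, (0:ℝ)).1 - (A, (0:ℝ)).1, (z, (0:ℝ)).2 - (A, (0:ℝ)).2) = z - A := by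
      simp only [gam]
      norm_num
      rw [Real.sq_sqrt (by linarith : (0:ℝ) ≤ z - A)]
    rw [hg]
    simp only []
    rw [← mul_assoc, mul_inv_cancel₀ (by simpa using hne), one_mul]

lemma straight_value_anti (hd : d.IsStepOf c) (q : ℝ) {b w : ℝ} (hbw : b ≤ w) :
    ∃ f, IsWedgePath (-b, b) (-w, w) f
      ∧ wPathIntegral c q f = Uf c q (-b) - Uf c q (-w) := by
  refine ⟨straightPath (-b, b) (-w, w),
    straight_isWedgePath (by simp; linarith) (by simp), ?_⟩
  rcases eq_or_lt_of_le hbw with heq | hlt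
  · rw [straight_const_value hd q _ _ (by simp [heq]) (by simp [heq])]
    rw [heq]
    ring
  · have hne : ((-w : ℝ), w).1 - ((-b : ℝ), b).1 ≠ 0 := by simp; linarith
    rw [straight_integral_eq hd q _ _ hne]
    have hg : gam (((-w : ℝ), w).1 - ((-b : ℝ), b).1, ((-w : ℝ), w).2 - ((-b : ℝ), b).2)
        = w - b := by
      simp only [gam]
      rw [show (-w : ℝ) - (-b) + (w - b) = 0 by ring]
      rw [Real.sqrt_zero, zero_add]
      exact Real.sq_sqrt (by linarith : (0:ℝ) ≤ w - b)
    rw [hg]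
    simp only []
    have hbw' : (-w : ℝ) + b ≠ 0 := by intro h; simp at hne; apply hne; linarith
    field_simp
    ring

end Straight

end Aux





set_option maxHeartbeats 2000000 in
/-- Theorem: modulus of continuity `C√δ` for `Γ^q` along the wedge boundary directions. -/
theorem stmt6 (c : ℝ → ℝ) (hc : IsStepSpeed c) (q z w : ℝ) (hz : 0 < z) (hw : 0 < w) :
    ∃ C : ℝ, ∀ δ ∈ Ioc (0 : ℝ) 1,
      (∀ a ∈ Icc (0 : ℝ) z,
        GammaFrom c q (a, 0) (z, δ) - GammaFrom c q (a, 0) (z, 0) ≤ C * Real.sqrt δ) ∧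
      (∀ b ∈ Icc (0 : ℝ) w,
        GammaFrom c q (-b, b) (-w, w + δ) - GammaFrom c q (-b, b) (-w, w) ≤ C * Real.sqrt δ) := by
  obtain ⟨d, hd⟩ := hc
  set M := (Aux.rmin d)⁻¹ with hM
  have hMpos : 0 < M := inv_pos.2 (Aux.rmin_pos d)
  refine ⟨2*M*(1 + Real.sqrt (z+1)) + 2*M*(1 + Real.sqrt (w+1)), ?_⟩
  intro δ hδ
  obtain ⟨hδ0, hδ1⟩ := hδ
  have hsd : 0 < Real.sqrt δ := Real.sqrt_pos.2 hδ0
  have hsdle : δ ≤ Real.sqrt δ := by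
    nlinarith [Real.mul_self_sqrt hδ0.le, Real.sqrt_nonneg δ,
      Real.sqrt_le_one.2 hδ1]
  constructor
  · -- horizontal boundary
    intro a ha
    obtain ⟨ha0, haz⟩ := ha
    have hz1 : (0:ℝ) < z + 1 := by linarith
    have hsz : 0 < Real.sqrt (z+1) := Real.sqrt_pos.2 hz1
    set t1 := Real.sqrt δ / Real.sqrt (z+1) with ht1
    have ht1p : 0 < t1 := div_pos hsd hsz
    have hUm : Aux.Uf c q a ≤ Aux.Uf c q z := Aux.U_mono hd q haz
    have hupper : GammaFrom c q (a, 0) (z, δ)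
        ≤ (Aux.Uf c q z - Aux.Uf c q a) + 2*M*δ + M*t1*((z+δ) - a) + M/t1*δ := by
      simp only [GammaFrom]
      apply Real.sSup_le
      · rintro I ⟨f, hf, rfl⟩
        have hb := (Aux.path_bound hd q hf ht1p).1
        rw [← hM] at hb
        refine hb.trans (le_of_eq ?_)
        norm_num
      · have h1 : 0 ≤ 2*M*δ := by positivity
        have h2 : 0 ≤ M*t1*((z+δ) - a) := by
          have : 0 ≤ (z+δ) - a := by linarith
          positivity
        have h3 : 0 ≤ M/t1*δ := by positivity
        linarith
    have hlower : Aux.Uf c q z - Aux.Uf c q a ≤ GammaFrom c q (a, 0) (z, 0) := by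
      obtain ⟨f, hfW, hfV⟩ := Aux.straight_value_horiz hd q haz
      simp only [GammaFrom]
      refine le_csSup ⟨(Aux.Uf c q z - Aux.Uf c q a) + 2*M*(0-0) + M*1*(z - a) + M/1*(0-0), ?_⟩
        ⟨f, hfW, hfV.symm⟩
      rintro I ⟨g, hg, rfl⟩
      have hb := (Aux.path_bound hd q hg one_pos).1
      rw [← hM] at hb
      refine hb.trans (le_of_eq ?_)
      norm_num
    -- arithmetic
    have e1 : t1 * (z + 1) = Real.sqrt δ * Real.sqrt (z+1) := by
      rw [ht1, div_mul_eq_mul_div, mul_div_assoc, Real.div_sqrt]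
    have e2 : M / t1 * δ = M * (Real.sqrt δ * Real.sqrt (z+1)) := by
      rw [ht1, div_div_eq_mul_div, div_mul_eq_mul_div, mul_div_assoc, Real.div_sqrt]
      ring
    have e3 : M*t1*((z+δ) - a) ≤ M * (Real.sqrt δ * Real.sqrt (z+1)) := by
      have h4 : (z+δ) - a ≤ z + 1 := by linarith
      calc M*t1*((z+δ) - a) ≤ M*t1*(z+1) := by
            have := mul_le_mul_of_nonneg_left h4 (by positivity : (0:ℝ) ≤ M*t1)
            linarith
        _ = M*(t1*(z+1)) := by ring
        _ = M * (Real.sqrt δ * Real.sqrt (z+1)) := by rw [e1]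
    have e4 : 2*M*δ ≤ 2*M*Real.sqrt δ := by
      have := mul_le_mul_of_nonneg_left hsdle (by positivity : (0:ℝ) ≤ 2*M)
      linarith
    have hw1 : 0 ≤ Real.sqrt (w+1) := Real.sqrt_nonneg _
    have hC : (2*M*(1 + Real.sqrt (z+1)) + 2*M*(1 + Real.sqrt (w+1))) * Real.sqrt δ
        = 2*M*Real.sqrt δ + 2*(M*(Real.sqrt δ * Real.sqrt (z+1)))
          + (2*M + 2*M*Real.sqrt (w+1))*Real.sqrt δ := by ring
    have h9 : 0 ≤ (2*M + 2*M*Real.sqrt (w+1))*Real.sqrt δ := by positivity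
    linarith [hupper, hlower, e2, e3, e4]
  · -- antidiagonal boundary
    intro b hb
    obtain ⟨hb0, hbw⟩ := hb
    have hw1 : (0:ℝ) < w + 1 := by linarith
    have hsw : 0 < Real.sqrt (w+1) := Real.sqrt_pos.2 hw1
    set t2 := Real.sqrt (w+1) / Real.sqrt δ with ht2
    have ht2p : 0 < t2 := div_pos hsw hsd
    have hUm : Aux.Uf c q (-w) ≤ Aux.Uf c q (-b) := Aux.U_mono hd q (by linarith)
    have hupper : GammaFrom c q (-b, b) (-w, w + δ)
        ≤ 2*M*δ - (Aux.Uf c q (-w) - Aux.Uf c q (-b)) + M*t2*δ + M/t2*((w+δ) - b) := by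
      simp only [GammaFrom]
      apply Real.sSup_le
      · rintro I ⟨f, hf, rfl⟩
        have hbnd := (Aux.path_bound hd q hf ht2p).2
        rw [← hM] at hbnd
        refine hbnd.trans (le_of_eq ?_)
        norm_num
      · have h1 : 0 ≤ 2*M*δ := by positivity
        have h2 : 0 ≤ M*t2*δ := by positivity
        have h3 : 0 ≤ M/t2*((w+δ) - b) := by
          have : 0 ≤ (w+δ) - b := by linarith
          positivity
        linarith
    have hlower : Aux.Uf c q (-b) - Aux.Uf c q (-w) ≤ GammaFrom c q (-b, b) (-w, w) := by
      obtain ⟨f, hfW, hfV⟩ := Aux.straight_value_anti hd q hbw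
      simp only [GammaFrom]
      refine le_csSup ⟨2*M*((-w + w) - (-b + b))
        - (Aux.Uf c q (-w) - Aux.Uf c q (-b)) + M*1*((-w + w) - (-b + b)) + M/1*(w - b), ?_⟩
        ⟨f, hfW, hfV.symm⟩
      rintro I ⟨g, hg, rfl⟩
      have hbnd := (Aux.path_bound hd q hg one_pos).2
      rw [← hM] at hbnd
      refine hbnd.trans (le_of_eq ?_)
      norm_num
    have e1 : t2 * δ = Real.sqrt δ * Real.sqrt (w+1) := by
      rw [ht2, div_mul_eq_mul_div, mul_div_assoc, Real.div_sqrt]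
      ring
    have e2 : M / t2 * (w + 1) = M * (Real.sqrt δ * Real.sqrt (w+1)) := by
      rw [ht2, div_div_eq_mul_div, div_mul_eq_mul_div, mul_div_assoc, Real.div_sqrt]
      ring
    have e3 : M/t2*((w+δ) - b) ≤ M * (Real.sqrt δ * Real.sqrt (w+1)) := by
      have h4 : (w+δ) - b ≤ w + 1 := by linarith
      have h5 : M/t2*((w+δ) - b) ≤ M/t2*(w+1) := by
        have := mul_le_mul_of_nonneg_left h4 (by positivity : (0:ℝ) ≤ M/t2)
        linarith
      rw [e2] at h5
      exact h5
    have e4 : 2*M*δ ≤ 2*M*Real.sqrt δ := by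
      have := mul_le_mul_of_nonneg_left hsdle (by positivity : (0:ℝ) ≤ 2*M)
      linarith
    have e5 : M*t2*δ = M * (Real.sqrt δ * Real.sqrt (w+1)) := by
      rw [mul_assoc, e1]
    have hz1 : 0 ≤ Real.sqrt (z+1) := Real.sqrt_nonneg _
    have hC : (2*M*(1 + Real.sqrt (z+1)) + 2*M*(1 + Real.sqrt (w+1))) * Real.sqrt δ
        = 2*M*Real.sqrt δ + 2*(M*(Real.sqrt δ * Real.sqrt (w+1)))
          + (2*M + 2*M*Real.sqrt (z+1))*Real.sqrt δ := by ring
    have h9 : 0 ≤ (2*M + 2*M*Real.sqrt (z+1))*Real.sqrt δ := by positivity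
    linarith [hupper, hlower, e3, e4, e5]

end
end

section
/- Let c be a speed function and ρ₀ : ℝ → [0,1] a measurable initial profile with antiderivative v₀. Then the function v(x,t) defined by the variational formula is Lipschitz continuous on every compact subset of ℝ × (0,∞). -/
open MeasureTheory ProbabilityTheory Real Set Filter Topology
open scoped Interval

noncomputable section


/-! ### The Hopf–Lax type variational formula for TASEP with discontinuous rates -/

/-- The wedge shape function `g`: `g(y) = -y` for `y ≤ -1`, `(1-y)²/4` for `-1 ≤ y ≤ 1`,
`0` for `y ≥ 1`. -/
def gfun (y : ℝ) : ℝ := if y ≤ -1 then -y else if y ≤ 1 then (1 - y) ^ 2 / 4 else 0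

/-- A continuous, piecewise `C¹` path `w : [0,t] → ℝ` with `w(t) = x`. -/
def IsVPath (t x : ℝ) (w : ℝ → ℝ) : Prop :=
  ContinuousOn w (Icc 0 t) ∧ w t = x ∧
    ∃ (k : ℕ) (s : Fin (k + 1) → ℝ), StrictMono s ∧ s 0 = 0 ∧ s (Fin.last k) = t ∧
      ∀ i : Fin k, ContDiffOn ℝ 1 w (Icc (s i.castSucc) (s i.succ))

/-- `w` is affine on `[a,b]`. -/
def AffineOnR (w : ℝ → ℝ) (a b : ℝ) : Prop :=
  ∀ u ∈ Icc a b, w u = w a + ((u - a) / (b - a)) * (w b - w a)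

/-- A continuous, piecewise linear path `w : [0,t] → ℝ` with `w(t) = x`. -/
def IsPLPath (t x : ℝ) (w : ℝ → ℝ) : Prop :=
  ContinuousOn w (Icc 0 t) ∧ w t = x ∧
    ∃ (k : ℕ) (s : Fin (k + 1) → ℝ), StrictMono s ∧ s 0 = 0 ∧ s (Fin.last k) = t ∧
      ∀ i : Fin k, AffineOnR w (s i.castSucc) (s i.succ)

/-- `v₀` is an antiderivative of the initial profile `ρ₀`, normalized by `v₀(0) = 0`. -/
def IsV0For (ρ₀ v₀ : ℝ → ℝ) : Prop :=
  v₀ 0 = 0 ∧ ∀ a b : ℝ, v₀ b - v₀ a = ∫ x in a..b, ρ₀ x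

/-- The variational formula:
`v(x,t) = sup over paths w with w(t) = x of { v₀(w(0)) - ∫₀ᵗ c(w(s)) g(w'(s)/c(w(s))) ds }`,
with `v(x,0) = v₀(x)`. -/
def vFun (c v₀ : ℝ → ℝ) (x t : ℝ) : ℝ :=
  if t ≤ 0 then v₀ x
  else sSup { A | ∃ w : ℝ → ℝ, IsVPath t x w ∧
    A = v₀ (w 0) - ∫ s in (0:ℝ)..t, c (w s) * gfun (deriv w s / c (w s)) }

/-- The two-phase speed function: `c₁` to the left of the origin, `c₂` to its right. -/
def twoPhase (c₁ c₂ : ℝ) : ℝ → ℝ := fun u => if u < 0 then c₁ else c₂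

/-- The conjugate `(a·h)*(y) = inf_{ρ ∈ ℝ} ( yρ - a ρ(1-ρ) )` of the unrestricted flux. -/
def hstar (a y : ℝ) : ℝ := sInf { v | ∃ ρ : ℝ, v = y * ρ - a * (ρ * (1 - ρ)) }

/-- The Hopf–Lax formula over piecewise linear paths with the conjugate `(c·h)*`. -/
def VFunPL (c v₀ : ℝ → ℝ) (x t : ℝ) : ℝ :=
  sSup { A | ∃ w : ℝ → ℝ, IsPLPath t x w ∧
    A = v₀ (w 0) + ∫ s in (0:ℝ)..t, hstar (c (w s)) (deriv w s) }


namespace StmtAux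


lemma gfun_nonneg (y : ℝ) : 0 ≤ gfun y := by
  unfold gfun; split_ifs with h1 h2
  · linarith
  · positivity
  · exact le_refl 0

lemma gfun_ge (y : ℝ) : -y ≤ gfun y := by
  unfold gfun; split_ifs with h1 h2
  · exact le_refl _
  · nlinarith
  · linarith

lemma gfun_le (y : ℝ) : gfun y ≤ 1/4 + max 0 (-y) := by
  unfold gfun; split_ifs with h1 h2
  · have : max 0 (-y) = -y := max_eq_right (by linarith)
    rw [this]; linarith
  · rcases le_total y 0 with h | h
    · have : max 0 (-y) = -y := max_eq_right (by linarith)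
      rw [this]; nlinarith
    · have h0 : 0 ≤ max 0 (-y) := le_max_left _ _
      nlinarith
  · have h0 : 0 ≤ max 0 (-y) := le_max_left _ _
    linarith

lemma gfun_zero : gfun 0 = 1/4 := by norm_num [gfun]

lemma gfun_continuous : Continuous gfun := by
  unfold gfun
  exact Continuous.if_le
    continuous_neg
    (Continuous.if_le (by fun_prop) continuous_const continuous_id continuous_const
      (fun x hx => by norm_num [hx]))
    continuous_id continuous_const
    (fun x hx => by norm_num [hx])

lemma cg_nonneg {a : ℝ} (ha : 0 < a) (y : ℝ) : 0 ≤ a * gfun (y / a) :=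
  mul_nonneg ha.le (gfun_nonneg _)

lemma cg_ge {a : ℝ} (ha : 0 < a) (y : ℝ) : -y ≤ a * gfun (y / a) := by
  have h := mul_le_mul_of_nonneg_left (gfun_ge (y / a)) ha.le
  have h2 : a * -(y / a) = -y := by field_simp
  linarith

lemma cg_le {a : ℝ} (ha : 0 < a) (y : ℝ) : a * gfun (y / a) ≤ a / 4 + max 0 (-y) := by
  have h := mul_le_mul_of_nonneg_left (gfun_le (y / a)) ha.le
  have h2 : a * max 0 (-(y/a)) = max 0 (-y) := by
    rcases le_total y 0 with h' | h'
    · rw [max_eq_right (neg_nonneg.mpr (div_nonpos_of_nonpos_of_nonneg h' ha.le)), max_eq_right (by linarith)]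
      field_simp
    · rw [max_eq_left, max_eq_left (by linarith), mul_zero]
      simp only [neg_nonpos]
      positivity
  calc a * gfun (y / a) ≤ a * (1/4 + max 0 (-(y/a))) := h
  _ = a / 4 + max 0 (-y) := by rw [mul_add, h2]; ring



lemma speed_meas {c : ℝ → ℝ} (hc : IsSpeedFunction c) : Measurable c :=
  hc.2.1.measurable

lemma speed_loc_bdd {c : ℝ → ℝ} (hc : IsSpeedFunction c) (x : ℝ) :
    ∃ M : ℝ, ∀ᶠ y in 𝓝 x, c y ≤ M := by
  obtain ⟨l, r, hl, hr, hx⟩ := hc.2.2.1 x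
  refine ⟨max (max l r) (c x) + 1, ?_⟩
  have h1 : ∀ᶠ y in 𝓝[<] x, c y ≤ max (max l r) (c x) + 1 := by
    filter_upwards [hl.eventually_le_const (show l < max (max l r) (c x) + 1 by
      have := le_max_left l r; have := le_max_left (max l r) (c x); linarith)] with y hy
    exact hy
  have h2 : ∀ᶠ y in 𝓝[≥] x, c y ≤ max (max l r) (c x) + 1 := by
    have h2' : ∀ᶠ y in 𝓝[>] x, c y ≤ max (max l r) (c x) + 1 := by
      filter_upwards [hr.eventually_le_const (show r < max (max l r) (c x) + 1 by
        have := le_max_right l r; have := le_max_left (max l r) (c x); linarith)] with y hy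
      exact hy
    rw [show Ici x = insert x (Ioi x) from (Set.Ioi_insert).symm, nhdsWithin_insert]
    refine Filter.eventually_sup.mpr ⟨?_, h2'⟩
    simp only [Filter.eventually_pure]
    have := le_max_right (max l r) (c x); linarith
  have := nhdsLT_sup_nhdsGE x
  rw [← this]
  exact Filter.eventually_sup.mpr ⟨h1, h2⟩

lemma speed_bdd_on {c : ℝ → ℝ} (hc : IsSpeedFunction c) {K : Set ℝ} (hK : IsCompact K) :
    ∃ M : ℝ, 0 ≤ M ∧ ∀ x ∈ K, c x ≤ M := by
  choose M hM using fun x => speed_loc_bdd hc x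
  have key : ∀ x : ℝ, ∃ U : Set ℝ, IsOpen U ∧ x ∈ U ∧ ∀ y ∈ U, c y ≤ M x := by
    intro x
    obtain ⟨U, hU, hUo, hxU⟩ := mem_nhds_iff.mp (hM x)
    exact ⟨U, hUo, hxU, fun y hy => hU hy⟩
  choose U hUo hxU hUb using key
  obtain ⟨t, ht2, ht⟩ := hK.elim_nhds_subcover   U (fun x _ => (hUo x).mem_nhds (hxU x))
  rcases t.eq_empty_or_nonempty with rfl | hne
  · exact ⟨0, le_refl _, fun x hx => absurd (ht hx) (by simp)⟩
  refine ⟨max (t.sup' hne M) 0, le_max_right _ _, fun x hx => ?_⟩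
  obtain ⟨y, hyt, hyU⟩ := Set.mem_iUnion₂.mp (ht hx)
  exact le_trans (hUb y x hyU) (le_trans (Finset.le_sup' M hyt) (le_max_left _ _))

lemma v0_mono_lip {ρ₀ v₀ : ℝ → ℝ} (hρmeas : Measurable ρ₀)
    (hρ : ∀ x, ρ₀ x ∈ Icc (0 : ℝ) 1) (hv₀ : IsV0For ρ₀ v₀) {a b : ℝ} (hab : a ≤ b) :
    v₀ a ≤ v₀ b ∧ v₀ b ≤ v₀ a + (b - a) := by
  have hint : IntervalIntegrable ρ₀ volume a b := by
    rw [intervalIntegrable_iff_integrableOn_Ioc_of_le hab]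
    refine Integrable.mono' (g := fun _ => (1:ℝ))
      (integrableOn_const measure_Ioc_lt_top.ne)
      hρmeas.aestronglyMeasurable ?_
    filter_upwards with y
    rw [Real.norm_eq_abs, abs_le]
    exact ⟨by linarith [(hρ y).1], (hρ y).2⟩
  have h := (hv₀.2 a b)
  constructor
  · have : 0 ≤ ∫ x in a..b, ρ₀ x :=
      intervalIntegral.integral_nonneg hab (fun u _ => (hρ u).1)
    linarith
  · have : (∫ x in a..b, ρ₀ x) ≤ ∫ _x in a..b, (1:ℝ) :=
      intervalIntegral.integral_mono_on hab hint intervalIntegrable_const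
        (fun u _ => (hρ u).2)
    simp only [intervalIntegral.integral_const, smul_eq_mul, mul_one] at this
    linarith



/-- The integrand of the variational formula. -/
def phi (c w : ℝ → ℝ) (u : ℝ) : ℝ := c (w u) * gfun (deriv w u / c (w u))

theorem path_key {c w : ℝ → ℝ} {t x : ℝ} (hc : IsSpeedFunction c)
    (hw : IsVPath t x w) (ht : 0 < t) :
    ∀ a b : ℝ, 0 ≤ a → a ≤ b → b ≤ t →
      IntervalIntegrable (phi c w) volume a b ∧
      max 0 (w a - w b) ≤ ∫ u in a..b, phi c w u := by
  obtain ⟨hcont, hwt, k, s, hs, hs0, hsl, hpc⟩ := hw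
  have hk : 0 < k := by
    rcases Nat.eq_zero_or_pos k with rfl | h
    · exfalso; rw [show (Fin.last 0) = 0 from rfl] at hsl; rw [hs0] at hsl; linarith
    · exact h
  set F : ℝ → ℝ := fun u => derivWithin w (Ici u) u with hF
  -- find the piece containing u
  have find : ∀ u, 0 ≤ u → u < t → ∃ i : Fin k, s i.castSucc ≤ u ∧ u < s i.succ := by
    intro u hu0 hut
    have hne : (Finset.univ.filter (fun i : Fin (k+1) => s i ≤ u)).Nonempty :=
      ⟨0, by simp [hs0, hu0]⟩
    set j := (Finset.univ.filter (fun i : Fin (k+1) => s i ≤ u)).max' hne with hj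
    have hjmem := (Finset.univ.filter (fun i : Fin (k+1) => s i ≤ u)).max'_mem hne
    rw [Finset.mem_filter] at hjmem
    have hju : s j ≤ u := hjmem.2
    have hjlast : j ≠ Fin.last k := by
      intro h; rw [h, hsl] at hju; linarith
    have hjk : (j : ℕ) < k := by
      have := j.isLt
      rcases Nat.lt_or_ge (j : ℕ) k with h | h
      · exact h
      · exact absurd (Fin.ext (by omega : (j:ℕ) = k)) hjlast
    refine ⟨⟨(j:ℕ), hjk⟩, ?_, ?_⟩
    · have : (⟨(j:ℕ), hjk⟩ : Fin k).castSucc = j := by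
        apply Fin.ext; simp
      rw [this]; exact hju
    · by_contra h
      push_neg at h
      have hmem : (⟨(j:ℕ), hjk⟩ : Fin k).succ ∈
          (Finset.univ.filter (fun i : Fin (k+1) => s i ≤ u)) := by
        simp only [Finset.mem_filter, Finset.mem_univ, true_and]; exact h
      have := Finset.le_max' _ _ hmem
      rw [← hj] at this
      have : ((⟨(j:ℕ), hjk⟩ : Fin k).succ : ℕ) ≤ (j : ℕ) := this
      simp at this
  -- right derivative identification on each piece
  have hFpiece : ∀ (i : Fin k) (u : ℝ), s i.castSucc ≤ u → u < s i.succ →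
      HasDerivWithinAt w (F u) (Ici u) u ∧
      F u = derivWithin w (Icc (s i.castSucc) (s i.succ)) u := by
    intro i u h1 h2
    have hii : s i.castSucc < s i.succ := hs (Fin.castSucc_lt_succ (i := i))
    have hdiff := (hpc i).differentiableOn one_ne_zero
    have hd := (hdiff u ⟨h1, h2.le⟩).hasDerivWithinAt
    have hsub : Icc u (s i.succ) ⊆ Icc (s i.castSucc) (s i.succ) :=
      Icc_subset_Icc h1 le_rfl
    have hd2 : HasDerivWithinAt w (derivWithin w (Icc (s i.castSucc) (s i.succ)) u)
        (Icc u (s i.succ)) u := hd.mono hsub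
    have hmem : Icc u (s i.succ) ∈ 𝓝[Ici u] u :=
      Icc_mem_nhdsGE_of_mem ⟨le_rfl, h2⟩
    have hd3 : HasDerivWithinAt w (derivWithin w (Icc (s i.castSucc) (s i.succ)) u)
        (Ici u) u := hd2.mono_of_mem_nhdsWithin hmem
    have he : F u = derivWithin w (Icc (s i.castSucc) (s i.succ)) u :=
      hd3.derivWithin (uniqueDiffOn_Ici u u Set.self_mem_Ici)
    exact ⟨he ▸ hd3, he⟩
  -- bound on F on [0, t)
  have hFbdd : ∃ M : ℝ, 0 ≤ M ∧ ∀ u, 0 ≤ u → u < t → |F u| ≤ M := by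
    have hCi : ∀ i : Fin k, ∃ Ci : ℝ, ∀ u ∈ Icc (s i.castSucc) (s i.succ),
        |derivWithin w (Icc (s i.castSucc) (s i.succ)) u| ≤ Ci := by
      intro i
      have hii : s i.castSucc < s i.succ := hs (Fin.castSucc_lt_succ (i := i))
      have hcd : ContinuousOn (derivWithin w (Icc (s i.castSucc) (s i.succ)))
          (Icc (s i.castSucc) (s i.succ)) :=
        (hpc i).continuousOn_derivWithin (uniqueDiffOn_Icc hii) le_rfl
      obtain ⟨Ci, hCi⟩ := isCompact_Icc.exists_bound_of_continuousOn hcd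
      exact ⟨Ci, fun u hu => by simpa [Real.norm_eq_abs] using hCi u hu⟩
    choose C hC using hCi
    have hne : (Finset.univ : Finset (Fin k)).Nonempty := Finset.univ_nonempty_iff.mpr
      (Fin.pos_iff_nonempty.mp hk)
    refine ⟨max (Finset.univ.sup' hne C) 0, le_max_right _ _, fun u hu0 hut => ?_⟩
    obtain ⟨i, h1, h2⟩ := find u hu0 hut
    rw [(hFpiece i u h1 h2).2]
    exact le_trans (hC i u ⟨h1, h2.le⟩)
      (le_trans (Finset.le_sup' C (Finset.mem_univ i)) (le_max_left _ _))
  obtain ⟨MF, hMF0, hMF⟩ := hFbdd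
  have hFmeas : Measurable F := measurable_derivWithin_Ici w
  -- a.e. interior points avoid the partition points and t
  have hae_ne : ∀ a b : ℝ, ∀ᵐ u ∂volume.restrict (Ι a b), u ∉ range s := by
    intro a b
    refine ae_restrict_of_ae ?_
    have hfin : (range s).Finite := Set.finite_range s
    have hz := hfin.measure_zero (μ := volume)
    rw [MeasureTheory.ae_iff]
    simpa [not_not, Set.range] using hz
  -- F is interval integrable on subintervals of [0,t]
  have hFint : ∀ a b : ℝ, 0 ≤ a → a ≤ b → b ≤ t → IntervalIntegrable F volume a b := by
    intro a b ha hab hbt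
    rw [intervalIntegrable_iff_integrableOn_Ioc_of_le hab]
    refine Integrable.mono' (g := fun _ => MF)
      (integrableOn_const measure_Ioc_lt_top.ne)
      hFmeas.aestronglyMeasurable.restrict ?_
    have h2 := hae_ne a b
    rw [Set.uIoc_of_le hab] at h2
    rw [ae_restrict_iff' measurableSet_Ioc] at h2 ⊢
    filter_upwards [h2] with u hu hmem
    have hu' := hu hmem
    have hu0 : 0 ≤ u := le_trans ha hmem.1.le
    have hut : u < t := by
      rcases lt_or_eq_of_le (le_trans hmem.2 hbt) with h | h
      · exact h
      · exact absurd (show u ∈ range s from ⟨Fin.last k, hsl.trans h.symm⟩) hu'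
    exact (Real.norm_eq_abs _) ▸ hMF u hu0 hut
  -- FTC for F
  have hftc : ∀ a b : ℝ, 0 ≤ a → a ≤ b → b ≤ t → (∫ u in a..b, F u) = w b - w a := by
    intro a b ha hab hbt
    refine intervalIntegral.integral_eq_sub_of_hasDeriv_right_of_le hab
      (hcont.mono (Icc_subset_Icc ha hbt)) (fun u hu => ?_) (hFint a b ha hab hbt)
    have hu0 : 0 ≤ u := le_trans ha hu.1.le
    have hut : u < t := lt_of_lt_of_le hu.2 hbt
    obtain ⟨i, h1, h2⟩ := find u hu0 hut
    exact ((hFpiece i u h1 h2).1).mono Ioi_subset_Ici_self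
  -- a.e. equality of deriv w and F
  have hderiv_ae : ∀ a b : ℝ, 0 ≤ a → a ≤ b → b ≤ t →
      ∀ᵐ u ∂volume.restrict (Ι a b), phi c w u = c (w u) * gfun (F u / c (w u)) := by
    intro a b ha hab hbt
    have h2 := hae_ne a b
    rw [Set.uIoc_of_le hab] at h2 ⊢
    rw [ae_restrict_iff' measurableSet_Ioc] at h2 ⊢
    filter_upwards [h2] with u hu hmem
    have hu' := hu hmem
    have hu0 : 0 ≤ u := le_trans ha hmem.1.le
    have hut : u < t := by
      rcases lt_or_eq_of_le (le_trans hmem.2 hbt) with h | h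
      · exact h
      · exact absurd (show u ∈ range s from ⟨Fin.last k, hsl.trans h.symm⟩) hu'
    obtain ⟨i, h1, h2'⟩ := find u hu0 hut
    have h1' : s i.castSucc < u := by
      rcases lt_or_eq_of_le h1 with h | h
      · exact h
      · exact absurd (show u ∈ range s from ⟨i.castSucc, h⟩) hu'
    have hdiff := (hpc i).differentiableOn one_ne_zero
    have hnb : Icc (s i.castSucc) (s i.succ) ∈ 𝓝 u := Icc_mem_nhds h1' h2'
    have hda : DifferentiableAt ℝ w u := (hdiff u ⟨h1, h2'.le⟩).differentiableAt hnb
    have : F u = deriv w u := hda.derivWithin (uniqueDiffOn_Ici u u Set.self_mem_Ici)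
    rw [phi, this]
  -- integrability and bound for the F-version of phi
  have hcwmeas : ∀ a b : ℝ, 0 ≤ a → a ≤ b → b ≤ t →
      AEMeasurable (fun u => c (w u)) (volume.restrict (Ι a b)) := by
    intro a b ha hab hbt
    rw [Set.uIoc_of_le hab]
    exact (speed_meas hc).comp_aemeasurable
      ((hcont.mono (fun u hu => ⟨le_trans ha hu.1.le, le_trans hu.2 hbt⟩)).aemeasurable
        measurableSet_Ioc)
  obtain ⟨Mc, hMc0, hMc⟩ := speed_bdd_on hc (isCompact_Icc.image_of_continuousOn hcont)
  have hphiFint : ∀ a b : ℝ, 0 ≤ a → a ≤ b → b ≤ t →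
      IntervalIntegrable (fun u => c (w u) * gfun (F u / c (w u))) volume a b := by
    intro a b ha hab hbt
    rw [intervalIntegrable_iff_integrableOn_Ioc_of_le hab]
    have hmeas : AEMeasurable (fun u => c (w u) * gfun (F u / c (w u)))
        (volume.restrict (Ioc a b)) := by
      have h1 := hcwmeas a b ha hab hbt
      rw [Set.uIoc_of_le hab] at h1
      exact h1.mul (gfun_continuous.measurable.comp_aemeasurable
        ((hFmeas.aemeasurable.restrict).div h1))
    refine Integrable.mono' (g := fun _ => Mc / 4 + MF)
      (integrableOn_const measure_Ioc_lt_top.ne)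
      hmeas.aestronglyMeasurable ?_
    have h2 := hae_ne a b
    rw [Set.uIoc_of_le hab] at h2
    rw [ae_restrict_iff' measurableSet_Ioc] at h2 ⊢
    filter_upwards [h2] with u hu hmem
    have hu' := hu hmem
    have hu0 : 0 ≤ u := le_trans ha hmem.1.le
    have hut : u < t := by
      rcases lt_or_eq_of_le (le_trans hmem.2 hbt) with h | h
      · exact h
      · exact absurd (show u ∈ range s from ⟨Fin.last k, hsl.trans h.symm⟩) hu'
    have hcw : 0 < c (w u) := hc.1 (w u)
    have hb1 : c (w u) * gfun (F u / c (w u)) ≤ c (w u) / 4 + max 0 (-(F u)) :=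
      cg_le hcw (F u)
    have hcwb : c (w u) ≤ Mc := hMc _ ⟨u, ⟨hu0, hut.le⟩, rfl⟩
    have hFb : max 0 (-(F u)) ≤ MF := by
      rcases le_total 0 (-(F u)) with h | h
      · rw [max_eq_right h]; have := hMF u hu0 hut; rw [abs_le] at this; linarith
      · rw [max_eq_left h]; exact hMF0
    rw [Real.norm_eq_abs, abs_of_nonneg (cg_nonneg hcw (F u))]
    linarith
  -- conclusion
  intro a b ha hab hbt
  have hint : IntervalIntegrable (phi c w) volume a b :=
    (hphiFint a b ha hab hbt).congr_ae (Filter.EventuallyEq.symm (hderiv_ae a b ha hab hbt))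
  refine ⟨hint, ?_⟩
  have heq : (∫ u in a..b, phi c w u) = ∫ u in a..b, c (w u) * gfun (F u / c (w u)) :=
    intervalIntegral.integral_congr_ae
      ((ae_restrict_iff' measurableSet_uIoc).mp (hderiv_ae a b ha hab hbt))
  rw [heq]
  refine max_le ?_ ?_
  · exact intervalIntegral.integral_nonneg hab (fun u _ => cg_nonneg (hc.1 (w u)) (F u))
  · have hmono := intervalIntegral.integral_mono_on hab (hFint a b ha hab hbt).neg
      (hphiFint a b ha hab hbt) (fun u _ => cg_ge (hc.1 (w u)) (F u))
    have h3 : (∫ u in a..b, -F u) = -(w b - w a) := by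
      rw [intervalIntegral.integral_neg, hftc a b ha hab hbt]
    simp only [Pi.neg_apply] at hmono
    rw [h3] at hmono
    linarith



/-- Truncated partition for the surgery in `master`. -/
def partS (k : ℕ) (s : Fin (k+1) → ℝ) (j : Fin (k+1)) (T₁ T : ℝ) :
    Fin ((j:ℕ) + 2 + 1) → ℝ := fun i =>
  if h : (i : ℕ) ≤ (j : ℕ) then s ⟨(i : ℕ), by omega⟩
  else if (i : ℕ) = (j : ℕ) + 1 then T₁ else T

lemma partS_mono {k : ℕ} {s : Fin (k+1) → ℝ} (hs : StrictMono s) {T₁ T : ℝ} (hT : T₁ < T)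
    {j : Fin (k+1)} (hjlt : s j < T₁) : StrictMono (partS k s j T₁ T) := by
  intro a b hab
  have hab' : (a : ℕ) < (b : ℕ) := hab
  have hbb := b.isLt
  unfold partS
  rcases Nat.lt_or_ge (b : ℕ) ((j:ℕ)+1) with hb | hb
  · rw [dif_pos (by omega : (a:ℕ) ≤ (j:ℕ)), dif_pos (by omega : (b:ℕ) ≤ (j:ℕ))]
    exact hs (Fin.mk_lt_mk.mpr hab')
  rcases Nat.lt_or_ge (b : ℕ) ((j:ℕ)+2) with hb2 | hb2
  · rw [dif_neg (by omega : ¬ ((b:ℕ) ≤ (j:ℕ))), if_pos (by omega : (b:ℕ) = (j:ℕ)+1),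
      dif_pos (by omega : (a:ℕ) ≤ (j:ℕ))]
    calc s ⟨(a:ℕ), by omega⟩ ≤ s j := hs.monotone (by
            rw [Fin.le_def]; simpa using by omega)
    _ < T₁ := hjlt
  · rw [dif_neg (by omega : ¬ ((b:ℕ) ≤ (j:ℕ))), if_neg (by omega : ¬ ((b:ℕ) = (j:ℕ)+1))]
    rcases Nat.lt_or_ge (a : ℕ) ((j:ℕ)+1) with ha | ha
    · rw [dif_pos (by omega : (a:ℕ) ≤ (j:ℕ))]
      calc s ⟨(a:ℕ), by omega⟩ ≤ s j := hs.monotone (by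
              rw [Fin.le_def]; simpa using by omega)
      _ < T₁ := hjlt
      _ < T := hT
    · rw [dif_neg (by omega : ¬ ((a:ℕ) ≤ (j:ℕ))), if_pos (by omega : (a:ℕ) = (j:ℕ)+1)]
      exact hT

lemma partS_zero {k : ℕ} (s : Fin (k+1) → ℝ) (j : Fin (k+1)) (T₁ T : ℝ) :
    partS k s j T₁ T 0 = s 0 := by
  unfold partS
  rw [dif_pos (by simp)]
  exact congrArg s (Fin.ext (by simp))

lemma partS_last {k : ℕ} (s : Fin (k+1) → ℝ) (j : Fin (k+1)) (T₁ T : ℝ) :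
    partS k s j T₁ T (Fin.last _) = T := by
  unfold partS
  rw [dif_neg (by simp), if_neg (by simp)]


set_option maxHeartbeats 2000000 in
theorem master {c w : ℝ → ℝ} {t' x' : ℝ} (hc : IsSpeedFunction c)
    (hw : IsVPath t' x' w) (ht' : 0 < t') {T₁ T xx : ℝ} (hT₁ : 0 < T₁) (hT₁' : T₁ ≤ t')
    (hT : T₁ < T) {M : ℝ} (hM : ∀ y ∈ uIcc (w T₁) xx, c y ≤ M) :
    ∃ ww : ℝ → ℝ, IsVPath T xx ww ∧ ww 0 = w 0 ∧
      (∫ u in (0:ℝ)..T, phi c ww u) ≤ (∫ u in (0:ℝ)..t', phi c w u)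
        - max 0 (w T₁ - x') + max 0 (w T₁ - xx) + M * (T - T₁) / 4 := by
  obtain ⟨hcont, hwt, k, s, hs, hs0, hsl, hpc⟩ := hw
  have hwpath : IsVPath t' x' w := ⟨hcont, hwt, k, s, hs, hs0, hsl, hpc⟩
  set m : ℝ := (xx - w T₁) / (T - T₁) with hm
  set aff : ℝ → ℝ := fun u => w T₁ + (u - T₁) * m with haffdef
  set ww : ℝ → ℝ := fun u => if u ≤ T₁ then w (min u T₁) else aff u with hwwdef
  have hTT : (0:ℝ) < T - T₁ := by linarith
  have haffd : ∀ u : ℝ, HasDerivAt aff m u := by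
    intro u
    have h := (((hasDerivAt_id u).sub_const T₁).mul_const m).const_add (w T₁)
    simpa [haffdef] using h
  have haffc : Continuous aff := by
    have : aff = fun u => w T₁ + (u - T₁) * m := rfl
    rw [this]; fun_prop
  have hwweq : ∀ u : ℝ, u ≤ T₁ → ww u = w u := by
    intro u hu; simp only [hwwdef, if_pos hu, min_eq_left hu]
  have hwwaff : ∀ u : ℝ, T₁ < u → ww u = aff u := by
    intro u hu; simp only [hwwdef, if_neg (not_le.mpr hu)]
  have haffT₁ : aff T₁ = w T₁ := by simp [haffdef]
  have hwwT : ww T = xx := by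
    rw [hwwaff T hT]
    simp only [haffdef, hm]
    field_simp
    ring
  have hww0 : ww 0 = w 0 := hwweq 0 hT₁.le
  -- continuity
  have hcontww : ContinuousOn ww (Icc 0 T) := by
    apply ContinuousOn.if
    · intro a ha
      have : a = T₁ := by
        have := ha.2
        rw [show {a : ℝ | a ≤ T₁} = Iic T₁ from rfl, frontier_Iic] at this
        exact this
      subst this
      simp [haffdef]
    · -- f on Icc 0 T ∩ closure {a ≤ T₁}
      have : ContinuousOn (fun u : ℝ => w (min u T₁)) (Icc 0 T ∩ closure {a : ℝ | a ≤ T₁}) := by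
        apply hcont.comp
        · exact (continuous_min.comp (continuous_id.prodMk continuous_const)).continuousOn
        · intro u hu
          constructor
          · exact le_min hu.1.1 hT₁.le
          · exact le_trans (min_le_right _ _) hT₁'
      exact this
    · exact haffc.continuousOn
  -- partition data
  have hjne : (Finset.univ.filter (fun i : Fin (k+1) => s i < T₁)).Nonempty :=
    ⟨0, by simp [hs0, hT₁]⟩
  set j := (Finset.univ.filter (fun i : Fin (k+1) => s i < T₁)).max' hjne with hjdef
  have hjmem := (Finset.univ.filter (fun i : Fin (k+1) => s i < T₁)).max'_mem hjne
  rw [Finset.mem_filter] at hjmem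
  have hjlt : s j < T₁ := hjmem.2
  have hgt : ∀ i : Fin (k+1), j < i → T₁ ≤ s i := by
    intro i hi
    by_contra h
    push_neg at h
    have hmem : i ∈ Finset.univ.filter (fun i : Fin (k+1) => s i < T₁) := by
      simp only [Finset.mem_filter, Finset.mem_univ, true_and]; exact h
    exact absurd (Finset.le_max' _ _ hmem) (not_le.mpr hi)
  have hjk : (j : ℕ) < k := by
    have hjlast : j ≠ Fin.last k := by
      intro h; rw [h, hsl] at hjlt; linarith
    have := j.isLt
    rcases Nat.lt_or_ge (j : ℕ) k with h | h
    · exact h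
    · exact absurd (Fin.ext (by omega : (j:ℕ) = k)) hjlast
  clear_value j
  -- the pieces property
  have hpieces : ∀ i : Fin ((j:ℕ) + 2),
      ContDiffOn ℝ 1 ww (Icc (partS k s j T₁ T i.castSucc) (partS k s j T₁ T i.succ)) := by
    intro i
    have hiv : (i : ℕ) < (j:ℕ) + 2 := i.isLt
    have hcs : ((i.castSucc : Fin ((j:ℕ)+3)) : ℕ) = (i : ℕ) := rfl
    have hsc : ((i.succ : Fin ((j:ℕ)+3)) : ℕ) = (i : ℕ) + 1 := rfl
    rcases Nat.lt_or_ge (i : ℕ) (j : ℕ) with hlt | hge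
    · -- old piece, fully below T₁
      have e1 : partS k s j T₁ T i.castSucc = s ⟨(i:ℕ), by omega⟩ := by
        unfold partS; rw [dif_pos (show ((i.castSucc : Fin ((j:ℕ)+3)) : ℕ) ≤ (j:ℕ) by omega)]
        exact congrArg s (Fin.ext rfl)
      have e2 : partS k s j T₁ T i.succ = s ⟨(i:ℕ)+1, by omega⟩ := by
        unfold partS; rw [dif_pos (show ((i.succ : Fin ((j:ℕ)+3)) : ℕ) ≤ (j:ℕ) by
          rw [hsc]; omega)]
        exact congrArg s (Fin.ext rfl)
      rw [e1, e2]
      have hmem : s ⟨(i:ℕ)+1, by omega⟩ ≤ s j := hs.monotone (by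
        rw [Fin.le_def]; simpa using by omega)
      have hto : ∀ u ∈ Icc (s ⟨(i:ℕ), by omega⟩) (s ⟨(i:ℕ)+1, by omega⟩), ww u = w u := by
        intro u hu
        exact hwweq u (le_trans hu.2 (le_trans hmem hjlt.le))
      have hold := hpc ⟨(i:ℕ), by omega⟩
      have ecs : ((⟨(i:ℕ), by omega⟩ : Fin k).castSucc) = (⟨(i:ℕ), by omega⟩ : Fin (k+1)) :=
        Fin.ext rfl
      have esc : ((⟨(i:ℕ), by omega⟩ : Fin k).succ) = (⟨(i:ℕ)+1, by omega⟩ : Fin (k+1)) :=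
        Fin.ext rfl
      rw [ecs, esc] at hold
      exact ContDiffOn.congr hold hto
    rcases Nat.lt_or_ge (i : ℕ) ((j:ℕ)+1) with heq | hge2
    · -- piece [s j, T₁]
      have hieq : (i:ℕ) = (j:ℕ) := by omega
      have e1 : partS k s j T₁ T i.castSucc = s j := by
        unfold partS; rw [dif_pos (show ((i.castSucc : Fin ((j:ℕ)+3)) : ℕ) ≤ (j:ℕ) by omega)]
        exact congrArg s (Fin.ext (by simpa using hieq))
      have e2 : partS k s j T₁ T i.succ = T₁ := by
        unfold partS
        rw [dif_neg (show ¬ ((i.succ : Fin ((j:ℕ)+3)) : ℕ) ≤ (j:ℕ) by rw [hsc]; omega),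
          if_pos (show ((i.succ : Fin ((j:ℕ)+3)) : ℕ) = (j:ℕ) + 1 by rw [hsc]; omega)]
      rw [e1, e2]
      have hjsucc : T₁ ≤ s ⟨(j:ℕ)+1, by omega⟩ := hgt _ (by
        rw [Fin.lt_def]; simpa using by omega)
      have hold := hpc ⟨(j:ℕ), by omega⟩
      have ecs : ((⟨(j:ℕ), by omega⟩ : Fin k).castSucc) = j := Fin.ext rfl
      have esc : ((⟨(j:ℕ), by omega⟩ : Fin k).succ) = (⟨(j:ℕ)+1, by omega⟩ : Fin (k+1)) :=
        Fin.ext rfl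
      rw [ecs, esc] at hold
      refine ContDiffOn.congr (hold.mono (Icc_subset_Icc le_rfl hjsucc)) ?_
      intro u hu
      exact hwweq u hu.2
    · -- piece [T₁, T]
      have e1 : partS k s j T₁ T i.castSucc = T₁ := by
        unfold partS
        rw [dif_neg (show ¬ ((i.castSucc : Fin ((j:ℕ)+3)) : ℕ) ≤ (j:ℕ) by rw [hcs]; omega),
          if_pos (show ((i.castSucc : Fin ((j:ℕ)+3)) : ℕ) = (j:ℕ) + 1 by rw [hcs]; omega)]
      have e2 : partS k s j T₁ T i.succ = T := by
        unfold partS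
        rw [dif_neg (show ¬ ((i.succ : Fin ((j:ℕ)+3)) : ℕ) ≤ (j:ℕ) by rw [hsc]; omega),
          if_neg (show ¬ ((i.succ : Fin ((j:ℕ)+3)) : ℕ) = (j:ℕ) + 1 by rw [hsc]; omega)]
      rw [e1, e2]
      have haffcd : ContDiffOn ℝ 1 aff (Icc T₁ T) := by
        have h1 : ContDiff ℝ 1 aff := by
          rw [haffdef]
          fun_prop
        exact h1.contDiffOn
      refine haffcd.congr ?_
      intro u hu
      rcases lt_or_eq_of_le hu.1 with h | h
      · exact hwwaff u h
      · rw [← h, hwweq T₁ le_rfl, haffT₁]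
  have hpath : IsVPath T xx ww :=
    ⟨hcontww, hwwT, (j:ℕ) + 2, partS k s j T₁ T, partS_mono hs hT hjlt,
      (partS_zero s j T₁ T).trans hs0, partS_last s j T₁ T, hpieces⟩
  -- cost accounting
  have pkold := path_key hc hwpath ht'
  have pknew := path_key hc hpath (lt_trans hT₁ hT)
  have hsplit_old : (∫ u in (0:ℝ)..T₁, phi c w u) + (∫ u in T₁..t', phi c w u)
      = ∫ u in (0:ℝ)..t', phi c w u :=
    intervalIntegral.integral_add_adjacent_intervals
      ((pkold 0 T₁ le_rfl hT₁.le hT₁').1) ((pkold T₁ t' hT₁.le hT₁' le_rfl).1)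
  have hsplit_new : (∫ u in (0:ℝ)..T₁, phi c ww u) + (∫ u in T₁..T, phi c ww u)
      = ∫ u in (0:ℝ)..T, phi c ww u :=
    intervalIntegral.integral_add_adjacent_intervals
      ((pknew 0 T₁ le_rfl hT₁.le hT.le).1) ((pknew T₁ T hT₁.le hT.le le_rfl).1)
  have hcongr1 : (∫ u in (0:ℝ)..T₁, phi c ww u) = ∫ u in (0:ℝ)..T₁, phi c w u := by
    apply intervalIntegral.integral_congr_ae
    have hT₁ne : ∀ᵐ u : ℝ ∂volume, u ≠ T₁ := by
      rw [MeasureTheory.ae_iff]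
      simpa using Real.volume_singleton
    filter_upwards [hT₁ne] with u hu hmem
    rw [Set.uIoc_of_le hT₁.le] at hmem
    have hu1 : u < T₁ := lt_of_le_of_ne hmem.2 hu
    have hev : ww =ᶠ[𝓝 u] w := by
      filter_upwards [Iio_mem_nhds hu1] with v hv
      exact hwweq v (le_of_lt hv)
    unfold phi
    rw [hev.deriv_eq, hwweq u hu1.le]
  have hae2 : ∀ᵐ u ∂volume.restrict (Ι T₁ T),
      phi c ww u = c (aff u) * gfun (m / c (aff u)) := by
    rw [ae_restrict_iff' measurableSet_uIoc]
    filter_upwards with u hmem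
    rw [Set.uIoc_of_le hT.le] at hmem
    have hu1 : T₁ < u := hmem.1
    have hev : ww =ᶠ[𝓝 u] aff := by
      filter_upwards [Ioi_mem_nhds hu1] with v hv
      exact hwwaff v hv
    unfold phi
    rw [hev.deriv_eq, (haffd u).deriv, hwwaff u hu1]
  have hcongr2 : (∫ u in T₁..T, phi c ww u)
      = ∫ u in T₁..T, c (aff u) * gfun (m / c (aff u)) :=
    intervalIntegral.integral_congr_ae ((ae_restrict_iff' measurableSet_uIoc).mp hae2)
  have hint2 : IntervalIntegrable (fun u => c (aff u) * gfun (m / c (aff u))) volume T₁ T :=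
    ((pknew T₁ T hT₁.le hT.le le_rfl).1).congr_ae hae2
  have haffmem : ∀ u ∈ Icc T₁ T, aff u ∈ uIcc (w T₁) xx := by
    intro u hu
    have h0 : 0 ≤ u - T₁ := by linarith [hu.1]
    have h1 : u - T₁ ≤ T - T₁ := by linarith [hu.2]
    have he : (T - T₁) * m = xx - w T₁ := by rw [hm]; field_simp
    rcases le_total (w T₁) xx with h | h
    · rw [uIcc_of_le h]
      have hmnn : 0 ≤ m := div_nonneg (by linarith) hTT.le
      constructor
      · simp only [haffdef]; nlinarith
      · simp only [haffdef]; nlinarith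
    · rw [uIcc_of_ge h]
      have hmnp : m ≤ 0 := div_nonpos_of_nonpos_of_nonneg (by linarith) hTT.le
      constructor
      · simp only [haffdef]; nlinarith
      · simp only [haffdef]; nlinarith
  have hconstb : ∀ u ∈ Icc T₁ T, c (aff u) * gfun (m / c (aff u)) ≤ M/4 + max 0 (-m) := by
    intro u hu
    have h1 := cg_le (hc.1 (aff u)) m
    have h2 := hM _ (haffmem u hu)
    have h3 : 0 ≤ max 0 (-m) := le_max_left _ _
    linarith
  have hboundseg : (∫ u in T₁..T, phi c ww u) ≤ M * (T - T₁)/4 + max 0 (w T₁ - xx) := by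
    rw [hcongr2]
    have hmono := intervalIntegral.integral_mono_on hT.le hint2
      intervalIntegrable_const hconstb
    rw [intervalIntegral.integral_const, smul_eq_mul] at hmono
    have hc1 : (T - T₁) * -m = w T₁ - xx := by
      rw [hm]; field_simp; ring
    have hmm : (T - T₁) * max 0 (-m) = max 0 (w T₁ - xx) := by
      rcases le_total 0 (-m) with h | h
      · have h2 : 0 ≤ w T₁ - xx := by rw [← hc1]; exact mul_nonneg hTT.le h
        rw [max_eq_right h, max_eq_right h2, hc1]
      · have h2 : w T₁ - xx ≤ 0 := by
          rw [← hc1]; exact mul_nonpos_iff.mpr (Or.inl ⟨hTT.le, h⟩)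
        rw [max_eq_left h, max_eq_left h2, mul_zero]
    have hx : (T - T₁) * (M/4 + max 0 (-m)) = M * (T-T₁)/4 + (T - T₁) * max 0 (-m) := by
      ring
    linarith
  have htail : max 0 (w T₁ - x') ≤ ∫ u in T₁..t', phi c w u := by
    have h := (pkold T₁ t' hT₁.le hT₁' le_rfl).2
    rwa [hwt] at h
  refine ⟨ww, hpath, hww0, ?_⟩
  linarith [hboundseg, htail, hsplit_new, hsplit_old, hcongr1]





/-- The set appearing in the variational formula. -/
def Sset (c v₀ : ℝ → ℝ) (x t : ℝ) : Set ℝ :=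
  { A | ∃ w : ℝ → ℝ, IsVPath t x w ∧ A = v₀ (w 0) - ∫ u in (0:ℝ)..t, phi c w u }

lemma vFun_pos (c v₀ : ℝ → ℝ) (x t : ℝ) (ht : 0 < t) :
    vFun c v₀ x t = sSup (Sset c v₀ x t) := by
  rw [vFun, if_neg (not_le.mpr ht)]
  rfl

lemma Sset_nonempty (c v₀ : ℝ → ℝ) (x t : ℝ) (ht : 0 < t) :
    (Sset c v₀ x t).Nonempty := by
  refine ⟨_, (fun _ => x), ?_, rfl⟩
  refine ⟨continuousOn_const, rfl, 1, ![0, t], ?_, rfl, rfl, ?_⟩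
  · intro a b hab
    fin_cases a <;> fin_cases b
    · exact absurd hab (lt_irrefl _)
    · simpa using ht
    · exact absurd hab (by decide)
    · exact absurd hab (lt_irrefl _)
  · intro i
    exact contDiffOn_const

lemma Sset_bddAbove {c v₀ ρ₀ : ℝ → ℝ} (hc : IsSpeedFunction c)
    (hρmeas : Measurable ρ₀) (hρ : ∀ x, ρ₀ x ∈ Icc (0 : ℝ) 1) (hv₀ : IsV0For ρ₀ v₀)
    (x t : ℝ) (ht : 0 < t) : v₀ x ∈ upperBounds (Sset c v₀ x t) := by
  rintro A ⟨w, hw, rfl⟩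
  have h := (path_key hc hw ht 0 t le_rfl ht.le le_rfl).2
  rw [hw.2.1] at h
  rcases le_total (w 0) x with h1 | h1
  · have := (v0_mono_lip hρmeas hρ hv₀ h1).1
    have h0 : (0:ℝ) ≤ ∫ u in (0:ℝ)..t, phi c w u := le_trans (le_max_left _ _) h
    linarith
  · have := (v0_mono_lip hρmeas hρ hv₀ h1).2
    have h0 : w 0 - x ≤ ∫ u in (0:ℝ)..t, phi c w u := le_trans (le_max_right _ _) h
    linarith

lemma max0_sub_le (u a b : ℝ) : max 0 (u - a) ≤ max 0 (u - b) + max 0 (b - a) := by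
  refine max_le (by positivity) ?_
  calc u - a = (u - b) + (b - a) := by ring
  _ ≤ max 0 (u - b) + max 0 (b - a) := add_le_add (le_max_right _ _) (le_max_right _ _)

lemma le_of_forall_eps {a b C ε₀ : ℝ} (hε₀ : 0 < ε₀) (hC : 0 ≤ C)
    (h : ∀ ε, 0 < ε → ε < ε₀ → a ≤ b + C * ε) : a ≤ b := by
  by_contra hcon
  push_neg at hcon
  have h1 : 0 < a - b := by linarith
  have hε : 0 < min (ε₀/2) ((a-b)/(2*(C+1))) := lt_min (by linarith) (by positivity)
  have h2 := h _ hε (lt_of_le_of_lt (min_le_left _ _) (by linarith))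
  have h4 : C * min (ε₀/2) ((a-b)/(2*(C+1))) ≤ C * ((a-b)/(2*(C+1))) :=
    mul_le_mul_of_nonneg_left (min_le_right _ _) hC
  have h5 : C * ((a-b)/(2*(C+1))) < a - b := by
    have hd : C / (2*(C+1)) < 1 := by
      rw [div_lt_one (by positivity)]; linarith
    calc C * ((a-b)/(2*(C+1))) = (C/(2*(C+1))) * (a-b) := by ring
    _ < 1 * (a-b) := mul_lt_mul_of_pos_right hd h1
    _ = a - b := one_mul _
  linarith

/-- E1: space estimate and time monotonicity. -/
lemma E1 {c v₀ ρ₀ : ℝ → ℝ} (hc : IsSpeedFunction c)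
    (hρmeas : Measurable ρ₀) (hρ : ∀ x, ρ₀ x ∈ Icc (0 : ℝ) 1) (hv₀ : IsV0For ρ₀ v₀)
    {x x' t t' : ℝ} (ht : 0 < t) (htt : t ≤ t') :
    vFun c v₀ x' t' - max 0 (x' - x) ≤ vFun c v₀ x t := by
  have ht' : 0 < t' := lt_of_lt_of_le ht htt
  rw [vFun_pos c v₀ x' t' ht', vFun_pos c v₀ x t ht, sub_le_iff_le_add]
  refine csSup_le (Sset_nonempty c v₀ x' t' ht') ?_
  rintro A' ⟨w, hw, rfl⟩
  -- uniform speed bound along the path and target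
  obtain ⟨B₀, hB₀⟩ := isCompact_Icc.exists_bound_of_continuousOn hw.1
  set B : ℝ := max B₀ |x| with hB
  obtain ⟨M, hM0, hM⟩ := speed_bdd_on hc (isCompact_Icc (a := -B) (b := B))
  refine le_of_forall_eps ht (by linarith : (0:ℝ) ≤ M/4) ?_
  intro δ hδ hδt
  have hT₁ : 0 < t - δ := by linarith
  have hT₁' : t - δ ≤ t' := by linarith
  have hTgt : t - δ < t := by linarith
  have hMun : ∀ y ∈ uIcc (w (t - δ)) x, c y ≤ M := by
    intro y hy
    have hw1 : |w (t - δ)| ≤ B := by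
      refine le_trans ?_ (le_max_left _ _)
      have := hB₀ (t - δ) ⟨hT₁.le, by linarith⟩
      rwa [Real.norm_eq_abs] at this
    have hx1 : |x| ≤ B := le_max_right _ _
    apply hM
    rcases mem_uIcc.mp hy with ⟨h1, h2⟩ | ⟨h1, h2⟩ <;>
      · rw [abs_le] at hw1 hx1
        exact ⟨by linarith, by linarith⟩
  obtain ⟨ww, hpath, hww0, hcost⟩ := master hc hw ht' hT₁ hT₁' hTgt hMun
  have hmem : v₀ (ww 0) - (∫ u in (0:ℝ)..t, phi c ww u) ∈ Sset c v₀ x t :=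
    ⟨ww, hpath, rfl⟩
  have hle := le_csSup ⟨v₀ x, Sset_bddAbove hc hρmeas hρ hv₀ x t ht⟩ hmem
  have htri := max0_sub_le (w (t - δ)) x x'
  rw [hww0] at hle
  have hTT : t - (t - δ) = δ := by ring
  rw [hTT] at hcost
  linarith

/-- E2: time upper estimate. -/
lemma E2 {c v₀ ρ₀ : ℝ → ℝ} (hc : IsSpeedFunction c)
    (hρmeas : Measurable ρ₀) (hρ : ∀ x, ρ₀ x ∈ Icc (0 : ℝ) 1) (hv₀ : IsV0For ρ₀ v₀)
    {x t t' : ℝ} (ht : 0 < t) (htt : t < t') :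
    vFun c v₀ x t - c x * (t' - t) / 4 ≤ vFun c v₀ x t' := by
  have ht' : 0 < t' := lt_trans ht htt
  rw [vFun_pos c v₀ x t ht, vFun_pos c v₀ x t' ht', sub_le_iff_le_add]
  refine csSup_le (Sset_nonempty c v₀ x t ht) ?_
  rintro A ⟨w, hw, rfl⟩
  have hMun : ∀ y ∈ uIcc (w t) x, c y ≤ c x := by
    intro y hy
    rw [hw.2.1, uIcc_self, mem_singleton_iff] at hy
    rw [hy]
  obtain ⟨ww, hpath, hww0, hcost⟩ := master hc hw ht ht le_rfl htt hMun
  have hmem : v₀ (ww 0) - (∫ u in (0:ℝ)..t', phi c ww u) ∈ Sset c v₀ x t' :=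
    ⟨ww, hpath, rfl⟩
  have hle := le_csSup ⟨v₀ x, Sset_bddAbove hc hρmeas hρ hv₀ x t' ht'⟩ hmem
  rw [hww0] at hle
  rw [hw.2.1] at hcost
  linarith


end StmtAux

open StmtAux

/-- Theorem: the variational formula defines a function that is Lipschitz on every compact
subset of space-time. -/
theorem stmt10 (c : ℝ → ℝ) (hc : IsSpeedFunction c)
    (ρ₀ v₀ : ℝ → ℝ) (hρmeas : Measurable ρ₀) (hρ : ∀ x, ρ₀ x ∈ Icc (0 : ℝ) 1)
    (hv₀ : IsV0For ρ₀ v₀) :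
    ∀ K : Set (ℝ × ℝ), IsCompact K → K ⊆ {p : ℝ × ℝ | 0 < p.2} →
      ∃ L : NNReal, LipschitzOnWith L (fun p : ℝ × ℝ => vFun c v₀ p.1 p.2) K := by
  intro K hK hKpos
  obtain ⟨R, hR⟩ := hK.isBounded.subset_closedBall 0
  have hRx : ∀ p ∈ K, |p.1| ≤ R := by
    intro p hp
    have h := hR hp
    rw [Metric.mem_closedBall, dist_zero_right] at h
    exact le_trans ((Real.norm_eq_abs p.1) ▸ norm_fst_le p) h
  obtain ⟨C, hC0, hC⟩ := speed_bdd_on hc (isCompact_Icc (a := -R) (b := R))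
  refine ⟨Real.toNNReal (1 + C/4), ?_⟩
  have hcoe : (Real.toNNReal (1 + C/4) : ℝ) = 1 + C/4 :=
    Real.coe_toNNReal _ (by positivity)
  -- helper estimates
  have hsp : ∀ (y y' τ : ℝ), 0 < τ → vFun c v₀ y τ - vFun c v₀ y' τ ≤ |y - y'| := by
    intro y y' τ hτ
    have h1 := E1 hc hρmeas hρ hv₀ (x := y') (x' := y) (t := τ) (t' := τ) hτ le_rfl
    have h2 : max 0 (y - y') ≤ |y - y'| := max_le (abs_nonneg _) (le_abs_self _)
    linarith
  have htm : ∀ (y τ τ' : ℝ), 0 < τ → τ ≤ τ' → |y| ≤ R →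
      |vFun c v₀ y τ - vFun c v₀ y τ'| ≤ C * (τ' - τ)/4 := by
    intro y τ τ' hτ hττ hy
    rcases eq_or_lt_of_le hττ with rfl | hlt
    · simp
    have h1 : vFun c v₀ y τ' ≤ vFun c v₀ y τ := by
      have := E1 hc hρmeas hρ hv₀ (x := y) (x' := y) (t := τ) (t' := τ') hτ hττ
      simpa using this
    have h2 := E2 hc hρmeas hρ hv₀ (x := y) hτ hlt
    have hcy : c y ≤ C := hC y (abs_le.mp hy)
    have hcy0 : 0 < c y := hc.1 y
    rw [abs_le]
    constructor
    · have h0 : (0:ℝ) ≤ C * (τ' - τ) / 4 := by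
        have : (0:ℝ) ≤ C * (τ' - τ) := mul_nonneg hC0 (by linarith)
        linarith
      linarith
    · have hmul : c y * (τ' - τ) ≤ C * (τ' - τ) :=
        mul_le_mul_of_nonneg_right hcy (by linarith)
      linarith
  apply LipschitzOnWith.of_dist_le_mul
  intro p hp q hq
  have hp2 : 0 < p.2 := hKpos hp
  have hq2 : 0 < q.2 := hKpos hq
  have hqx : |q.1| ≤ R := hRx q hq
  have hpx : |p.1| ≤ R := hRx p hp
  rw [hcoe, Prod.dist_eq, Real.dist_eq, Real.dist_eq, Real.dist_eq]
  have habs1 : |vFun c v₀ p.1 p.2 - vFun c v₀ q.1 p.2| ≤ |p.1 - q.1| := by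
    rw [abs_le]
    constructor
    · have := hsp q.1 p.1 p.2 hp2
      rw [abs_sub_comm] at this
      linarith
    · exact le_trans (sub_le_iff_le_add.mpr (by linarith [hsp p.1 q.1 p.2 hp2])) le_rfl
  have habs2 : |vFun c v₀ q.1 p.2 - vFun c v₀ q.1 q.2| ≤ C * |p.2 - q.2| / 4 := by
    rcases le_total p.2 q.2 with h | h
    · have := htm q.1 p.2 q.2 hp2 h hqx
      rw [abs_of_nonpos (by linarith : p.2 - q.2 ≤ 0)]
      calc |vFun c v₀ q.1 p.2 - vFun c v₀ q.1 q.2| ≤ C * (q.2 - p.2)/4 := this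
      _ = C * -(p.2 - q.2) / 4 := by ring
    · have := htm q.1 q.2 p.2 hq2 h hqx
      rw [abs_sub_comm, abs_of_nonneg (by linarith : 0 ≤ p.2 - q.2)]
      calc |vFun c v₀ q.1 q.2 - vFun c v₀ q.1 p.2| ≤ C * (p.2 - q.2)/4 := this
      _ = C * (p.2 - q.2) / 4 := by ring
  have htri : |vFun c v₀ p.1 p.2 - vFun c v₀ q.1 q.2| ≤
      |vFun c v₀ p.1 p.2 - vFun c v₀ q.1 p.2| + |vFun c v₀ q.1 p.2 - vFun c v₀ q.1 q.2| :=
    abs_sub_le _ _ _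
  have hm1 : |p.1 - q.1| ≤ max |p.1 - q.1| |p.2 - q.2| := le_max_left _ _
  have hm2 : |p.2 - q.2| ≤ max |p.1 - q.1| |p.2 - q.2| := le_max_right _ _
  have hm0 : (0:ℝ) ≤ max |p.1 - q.1| |p.2 - q.2| :=
    le_trans (abs_nonneg _) (le_max_left _ _)
  have hCmul : C * |p.2 - q.2| / 4 ≤ C * max |p.1 - q.1| |p.2 - q.2| / 4 := by
    have := mul_le_mul_of_nonneg_left hm2 hC0
    linarith
  calc |vFun c v₀ p.1 p.2 - vFun c v₀ q.1 q.2|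
      ≤ |p.1 - q.1| + C * |p.2 - q.2| / 4 := by linarith
    _ ≤ max |p.1 - q.1| |p.2 - q.2| + C * max |p.1 - q.1| |p.2 - q.2| / 4 := by linarith
    _ = (1 + C/4) * max |p.1 - q.1| |p.2 - q.2| := by ring


end
end
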